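/- arXiv:1112.0708 — 2 statements merged into one kernel-verified Lean document; each statement's English description precedes it below -/
import Mathlib

section
/- Let p_X be a probability measure on ℝ, X ~ p_X, and assume H(⌊X⌋) < ∞. If p_X = (1−ε)·ν_d + ε·ν̃ for some ε ∈ [0,1], where ν_d is a discrete probability measure (i.e., with countable support), then d̄(p_X) ≤ ε. If in addition ν̃ is absolutely continuous with respect to Lebesgue measure, then d̲(p_X) = d̄(p_X) = ε. In particular, if P(X ≠ 0) ≤ ε then d̄(p_X) ≤ ε. -/
open MeasureTheory ProbabilityTheory Filter BoundedContinuousFunction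
open scoped ENNReal NNReal

namespace DJM

/-- The standard Gaussian measure `N(0,1)` on `ℝ`. -/
noncomputable def stdGauss : Measure ℝ := gaussianReal 0 1

/-- The minimum mean square error for estimating `X ~ p` from the observation
`√s · X + Z`, `Z ~ N(0,1)` independent of `X`. -/
noncomputable def mmseReal (p : Measure ℝ) (s : ℝ) : ℝ :=
  ⨅ η : {f : ℝ → ℝ // Measurable f},
    ∫ q : ℝ × ℝ, (q.1 - η.1 (Real.sqrt s * q.1 + q.2)) ^ 2 ∂(p.prod stdGauss)

/-- `mmse` as a function on the extended signal-to-noise ratio, with `mmse ∞ = 0`. -/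
noncomputable def mmse (p : Measure ℝ) (s : ℝ≥0∞) : ℝ≥0∞ :=
  if s = ⊤ then 0 else ENNReal.ofReal (mmseReal p s.toReal)

/-- Shannon entropy of a (discrete) measure on `ℤ`. -/
noncomputable def shannonEntropy (μ : Measure ℤ) : ℝ≥0∞ :=
  ∑' i : ℤ, ENNReal.ofReal (Real.negMulLog (μ {i}).toReal)

/-- Upper Rényi information dimension: `limsup_ℓ H(⌊ℓX⌋)/(log ℓ)`. -/
noncomputable def infoDimUpper (p : Measure ℝ) : ℝ :=
  limsup (fun ℓ : ℕ => (shannonEntropy (p.map (fun x => ⌊(ℓ : ℝ) * x⌋))).toReal / Real.log ℓ) atTop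

/-- Lower Rényi information dimension. -/
noncomputable def infoDimLower (p : Measure ℝ) : ℝ :=
  liminf (fun ℓ : ℕ => (shannonEntropy (p.map (fun x => ⌊(ℓ : ℝ) * x⌋))).toReal / Real.log ℓ) atTop

/-- Upper MMSE dimension: `limsup_{s→∞} s · mmse(s)`. -/
noncomputable def mmseDimUpper (p : Measure ℝ) : ℝ := limsup (fun s : ℝ => s * mmseReal p s) atTop

/-- Lower MMSE dimension. -/
noncomputable def mmseDimLower (p : Measure ℝ) : ℝ := liminf (fun s : ℝ => s * mmseReal p s) atTop

/-- KL divergence (expressed via the Radon–Nikodym derivative). -/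
noncomputable def klDivReal {α : Type*} [MeasurableSpace α] (μ ν : Measure α) : ℝ :=
  ∫ a, Real.log (μ.rnDeriv ν a).toReal ∂μ

/-- Mutual information `I(s) = I(X ; √s X + Z)` for `X ~ p`, `Z ~ N(0,1)` independent:
the KL divergence between the joint law of `(X, √s X + Z)` and the product of marginals. -/
noncomputable def mutualInfoI (p : Measure ℝ) (s : ℝ) : ℝ :=
  klDivReal
    ((p.prod stdGauss).map (fun q : ℝ × ℝ => (q.1, Real.sqrt s * q.1 + q.2)))
    (p.prod ((p.prod stdGauss).map (fun q : ℝ × ℝ => Real.sqrt s * q.1 + q.2)))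

/-- The posterior-mean (Bayes optimal) denoiser for the prior `p` at signal-to-noise
ratio `s`: `η(v) = E[X | X + s^{-1/2} Z = v] = E[X e^{-s(v-X)²/2}]/E[e^{-s(v-X)²/2}]`. -/
noncomputable def postMean (p : Measure ℝ) (s : ℝ) (v : ℝ) : ℝ :=
  (∫ a, a * Real.exp (-(s * (v - a) ^ 2) / 2) ∂p) /
    (∫ a, Real.exp (-(s * (v - a) ^ 2) / 2) ∂p)

/-- Kolmogorov–Smirnov distance between two measures on `ℝ`. -/
noncomputable def ksDist (p q : Measure ℝ) : ℝ :=
  ⨆ z : ℝ, |(p (Set.Iic z)).toReal - (q (Set.Iic z)).toReal|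

/-- `|a - b|` in the extended nonnegative reals. -/
noncomputable def ediff (a b : ℝ≥0∞) : ℝ≥0∞ := (a - b) + (b - a)

section SE

variable {R C : Type*} [Fintype R] [Fintype C]

/-- The state evolution map `T''`: `φ_a = σ² + (1/δ) Σ_i W_{a,i} ψ_i`. -/
noncomputable def seφOf (W : R → C → ℝ≥0) (δ σ2 : ℝ) (ψ : C → ℝ≥0∞) (a : R) : ℝ≥0∞ :=
  ENNReal.ofReal σ2 + (ENNReal.ofReal δ)⁻¹ * ∑ i, (W a i : ℝ≥0∞) * ψ i

/-- The state evolution map `T'`: `ψ_i = mmse(Σ_b W_{b,i} φ_b⁻¹)`. -/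
noncomputable def seψOf (p : Measure ℝ) (W : R → C → ℝ≥0) (φ : R → ℝ≥0∞) (i : C) : ℝ≥0∞ :=
  mmse p (∑ b, (W b i : ℝ≥0∞) * (φ b)⁻¹)

/-- The state evolution sequence `ψ(t)` with initial condition `ψ0`. -/
noncomputable def seψ (p : Measure ℝ) (W : R → C → ℝ≥0) (δ σ2 : ℝ) (ψ0 : C → ℝ≥0∞) :
    ℕ → C → ℝ≥0∞
  | 0 => ψ0
  | t + 1 => seψOf p W (seφOf W δ σ2 (seψ p W δ σ2 ψ0 t))

/-- The state evolution sequence `φ(t)`. -/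
noncomputable def seφ (p : Measure ℝ) (W : R → C → ℝ≥0) (δ σ2 : ℝ) (ψ0 : C → ℝ≥0∞)
    (t : ℕ) : R → ℝ≥0∞ :=
  seφOf W δ σ2 (seψ p W δ σ2 ψ0 t)

/-- The initial condition `ψ_i(0) = ∞`. -/
noncomputable def seInit : C → ℝ≥0∞ := fun _ => ⊤

end SE

/-- A shape function: `C¹`, supported in `[-1,1]`, even, nonnegative, unit integral. -/
structure IsShapeFunction (𝒲 : ℝ → ℝ) : Prop where
  nonneg : ∀ x, 0 ≤ 𝒲 x
  smooth : ContDiff ℝ 1 𝒲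
  supp : ∀ x, 1 < |x| → 𝒲 x = 0
  even : ∀ x, 𝒲 (-x) = 𝒲 x
  normalized : ∫ x, 𝒲 x = 1

/-- Row index set of the spatially coupled matrix `W(L, L0, 𝒲, ρ)`, with `ρ = 1/k`:
`Sum.inl a` is the row `a - k ∈ {-ρ⁻¹, …, L-1+ρ⁻¹}` of `R₀`, and `Sum.inr (i, b)` is the
`b`-th row of the block `R_{i - 2k}`, `i - 2k ∈ {-2ρ⁻¹, …, -1}`, of size `L0`. -/
abbrev RIdx (L L0 k : ℕ) := Fin (L + 2 * k) ⊕ Fin (2 * k) × Fin L0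

/-- Column index set: `j` stands for the column `j - 2k ∈ {-2ρ⁻¹, …, L-1}`. -/
abbrev CIdx (L k : ℕ) := Fin (L + 2 * k)

/-- The spatially coupled matrix `W = W(L, L0, 𝒲, ρ)`, `ρ = 1/k`:
`W_{a,i} = ρ 𝒲(ρ(a-i))` for `a ∈ R₀`, and `W_{a,i} = 1` iff `a ∈ R_i` on the
oversampling blocks. -/
noncomputable def scW (𝒲 : ℝ → ℝ) (L L0 k : ℕ) : RIdx L L0 k → CIdx L k → ℝ≥0
  | Sum.inl a, j =>
      Real.toNNReal ((k : ℝ)⁻¹ * 𝒲 ((k : ℝ)⁻¹ * (((a : ℝ) - k) - ((j : ℝ) - 2 * k))))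
  | Sum.inr ib, j => if (j : ℕ) = (ib.1 : ℕ) then 1 else 0

/-- `mmse(L0/(2σ²))`, the boundary value used in the modified/continuum state evolution. -/
noncomputable def mmseFloor (p : Measure ℝ) (σ2 : ℝ) (L0 : ℕ) : ℝ≥0∞ :=
  mmse p (ENNReal.ofReal ((L0 : ℝ) / (2 * σ2)))

/-- The kernel `W_{a-i} = ρ 𝒲(ρ(a-i))`, `ρ = 1/k`, as a function of the real difference. -/
noncomputable def wker (𝒲 : ℝ → ℝ) (k : ℕ) (d : ℝ) : ℝ≥0 :=
  Real.toNNReal ((k : ℝ)⁻¹ * 𝒲 ((k : ℝ)⁻¹ * d))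

/-- Extension of a vector `ψ : Fin L → ℝ≥0∞` to `ℤ` by `mmse(L0/(2σ²))` on the left and
`∞` on the right. -/
noncomputable def modψext (p : Measure ℝ) (σ2 : ℝ) (L0 L : ℕ) (ψ : Fin L → ℝ≥0∞) (i : ℤ) :
    ℝ≥0∞ :=
  if h0 : i < 0 then mmseFloor p σ2 L0
  else if h : i < (L : ℤ) then ψ ⟨i.toNat, by omega⟩ else ⊤

/-- The modified state evolution map `F''`. -/
noncomputable def modF'' (𝒲 : ℝ → ℝ) (p : Measure ℝ) (δ σ2 : ℝ) (L0 L k : ℕ)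
    (ψ : Fin L → ℝ≥0∞) (a : Fin (L + 2 * k)) : ℝ≥0∞ :=
  ENNReal.ofReal σ2 + (ENNReal.ofReal δ)⁻¹ *
    ∑' i : ℤ, (wker 𝒲 k (((a : ℝ) - k) - i) : ℝ≥0∞) * modψext p σ2 L0 L ψ i

/-- The modified state evolution map `F'`. -/
noncomputable def modF' (𝒲 : ℝ → ℝ) (p : Measure ℝ) (L _L0 k : ℕ)
    (φ : Fin (L + 2 * k) → ℝ≥0∞) (i : Fin L) : ℝ≥0∞ :=
  mmse p (∑ b : Fin (L + 2 * k), (wker 𝒲 k (((b : ℝ) - k) - i) : ℝ≥0∞) * (φ b)⁻¹)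

/-- The modified state evolution sequence `ψ^mod(t)`. -/
noncomputable def modψseq (𝒲 : ℝ → ℝ) (p : Measure ℝ) (δ σ2 : ℝ) (L0 L k : ℕ) :
    ℕ → Fin L → ℝ≥0∞
  | 0 => fun _ => ⊤
  | t + 1 => modF' 𝒲 p L L0 k (modF'' 𝒲 p δ σ2 L0 L k (modψseq 𝒲 p δ σ2 L0 L k t))

/-- The modified state evolution sequence `φ^mod(t)`. -/
noncomputable def modφseq (𝒲 : ℝ → ℝ) (p : Measure ℝ) (δ σ2 : ℝ) (L0 L k : ℕ) (t : ℕ) :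
    Fin (L + 2 * k) → ℝ≥0∞ :=
  modF'' 𝒲 p δ σ2 L0 L k (modψseq 𝒲 p δ σ2 L0 L k t)

/-- Extension of `ψ : ℝ → ℝ≥0∞` beyond `[0,ℓ]` by `mmse(L0/(2σ²))` on the left and `∞`
on the right. -/
noncomputable def contψext (p : Measure ℝ) (σ2 : ℝ) (L0 : ℕ) (ℓ : ℝ) (ψ : ℝ → ℝ≥0∞)
    (x : ℝ) : ℝ≥0∞ :=
  if x < 0 then mmseFloor p σ2 L0 else if x ≤ ℓ then ψ x else ⊤

/-- The continuum state evolution map `F''`: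
`F''(ψ)(y) = σ² + (1/δ) ∫ 𝒲(y-x) ψ(x) dx`. -/
noncomputable def contF'' (𝒲 : ℝ → ℝ) (p : Measure ℝ) (δ σ2 : ℝ) (L0 : ℕ) (ℓ : ℝ)
    (ψ : ℝ → ℝ≥0∞) (y : ℝ) : ℝ≥0∞ :=
  ENNReal.ofReal σ2 + (ENNReal.ofReal δ)⁻¹ *
    ∫⁻ x, ENNReal.ofReal (𝒲 (y - x)) * contψext p σ2 L0 ℓ ψ x

/-- The continuum state evolution map `F'`:
`F'(φ)(x) = mmse(∫_{-1}^{ℓ+1} 𝒲(x-z) φ(z)⁻¹ dz)`. -/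
noncomputable def contF' (𝒲 : ℝ → ℝ) (p : Measure ℝ) (ℓ : ℝ) (φ : ℝ → ℝ≥0∞) (x : ℝ) :
    ℝ≥0∞ :=
  mmse p (∫⁻ z in Set.Icc (-1 : ℝ) (ℓ + 1), ENNReal.ofReal (𝒲 (x - z)) * (φ z)⁻¹)

/-- The continuum state evolution sequence `ψ(·;t)`. -/
noncomputable def contψseq (𝒲 : ℝ → ℝ) (p : Measure ℝ) (δ σ2 : ℝ) (L0 : ℕ) (ℓ : ℝ) :
    ℕ → ℝ → ℝ≥0∞
  | 0 => fun _ => ⊤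
  | t + 1 => contF' 𝒲 p ℓ (contF'' 𝒲 p δ σ2 L0 ℓ (contψseq 𝒲 p δ σ2 L0 ℓ t))

/-- The continuum state evolution sequence `φ(·;t)`. -/
noncomputable def contφseq (𝒲 : ℝ → ℝ) (p : Measure ℝ) (δ σ2 : ℝ) (L0 : ℕ) (ℓ : ℝ)
    (t : ℕ) : ℝ → ℝ≥0∞ :=
  contF'' 𝒲 p δ σ2 L0 ℓ (contψseq 𝒲 p δ σ2 L0 ℓ t)

end DJM

open DJM

namespace DJMAux

open DJM




lemma negMulLog_add_le {a b : ℝ} (ha : 0 ≤ a) (hb : 0 ≤ b) :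
    Real.negMulLog (a + b) ≤ Real.negMulLog a + Real.negMulLog b := by
  rcases eq_or_lt_of_le ha with rfl | ha'
  · simp
  rcases eq_or_lt_of_le hb with rfl | hb'
  · simp
  have hab : 0 < a + b := by linarith
  have h1 : -a * Real.log (a + b) ≤ -a * Real.log a := by
    have := Real.log_le_log ha' (by linarith : a ≤ a + b)
    nlinarith
  have h2 : -b * Real.log (a + b) ≤ -b * Real.log b := by
    have := Real.log_le_log hb' (by linarith : b ≤ a + b)
    nlinarith
  simp only [Real.negMulLog]
  nlinarith [Real.log_le_log ha' (by linarith : a ≤ a + b)]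

lemma negMulLog_le_one_sub {t : ℝ} (ht : 0 ≤ t) : Real.negMulLog t ≤ 1 - t := by
  rcases eq_or_lt_of_le ht with rfl | ht'
  · simp
  have h := Real.log_le_sub_one_of_pos (show (0:ℝ) < t⁻¹ by positivity)
  rw [Real.log_inv] at h
  have : -Real.log t ≤ t⁻¹ - 1 := h
  have h2 : t * (-Real.log t) ≤ t * (t⁻¹ - 1) := by
    exact mul_le_mul_of_nonneg_left this ht
  rw [mul_sub, mul_inv_cancel₀ (ne_of_gt ht')] at h2
  simp only [Real.negMulLog]
  nlinarith

lemma negMulLog_le_one {t : ℝ} (ht : 0 ≤ t) : Real.negMulLog t ≤ 1 := by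
  have := negMulLog_le_one_sub ht; linarith

/-- comparison: for `0 ≤ a ≤ b ≤ 1`, `negMulLog a ≤ negMulLog b + b`. -/
lemma negMulLog_le_of_le {a b : ℝ} (ha : 0 ≤ a) (hab : a ≤ b) (hb : b ≤ 1) :
    Real.negMulLog a ≤ Real.negMulLog b + b := by
  rcases eq_or_lt_of_le (ha.trans hab) with heq | hb'
  · have hb0 : b = 0 := heq.symm
    subst hb0
    have h0 : a = 0 := le_antisymm hab ha
    simp [h0]
  set t := a / b with htdef
  have ht0 : 0 ≤ t := by positivity
  have ht1 : t ≤ 1 := by rw [htdef, div_le_one hb']; exact hab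
  have hat : a = t * b := (div_mul_cancel₀ a (ne_of_gt hb')).symm
  rw [hat, Real.negMulLog_mul]
  have h1 : Real.negMulLog t ≤ 1 := negMulLog_le_one ht0
  have h2 : 0 ≤ Real.negMulLog b := Real.negMulLog_nonneg (le_of_lt hb') hb
  have hbpos : (0:ℝ) < b := hb'
  nlinarith

/-- grouping: `∑ negMulLog r ≤ negMulLog (∑ r) + (∑ r) log n`. -/
lemma sum_negMulLog_le {ι : Type*} (t : Finset ι) (r : ι → ℝ) (hr : ∀ i ∈ t, 0 ≤ r i) :
    ∑ i ∈ t, Real.negMulLog (r i) ≤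
      Real.negMulLog (∑ i ∈ t, r i) + (∑ i ∈ t, r i) * Real.log t.card := by
  rcases Finset.eq_empty_or_nonempty t with rfl | hne
  · simp
  set n : ℝ := (t.card : ℝ) with hn
  have hn0 : (0:ℝ) < n := by
    simp only [hn]
    exact_mod_cast Finset.card_pos.mpr hne
  have hjensen := Real.concaveOn_negMulLog.le_map_sum (t := t) (w := fun _ => n⁻¹)
    (p := fun i => n * r i) (fun i _ => by positivity)
    (by simp [Finset.sum_const, hn]; field_simp)
    (fun i hi => by
      have := hr i hi
      simp only [Set.mem_Ici]
      positivity)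
  have hsum : ∑ i ∈ t, n⁻¹ • (n * r i) = ∑ i ∈ t, r i := by
    apply Finset.sum_congr rfl
    intro i hi
    simp [smul_eq_mul]
    field_simp
  rw [hsum] at hjensen
  have hexp : ∀ i ∈ t, n⁻¹ • Real.negMulLog (n * r i)
      = Real.negMulLog (r i) - r i * Real.log n := by
    intro i hi
    have h := Real.negMulLog_mul n (r i)
    rw [smul_eq_mul, h]
    have : Real.negMulLog n = -n * Real.log n := rfl
    rw [this]
    field_simp
    ring
  rw [Finset.sum_congr rfl hexp, Finset.sum_sub_distrib] at hjensen
  have := hjensen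
  rw [← Finset.sum_mul] at this
  linarith

/-- core lower-bound inequality. -/
lemma lower_core {a c β : ℝ} (hc : 0 ≤ c) (hca : c ≤ a) (ha : a ≤ 1) (hcβ : c ≤ β)
    (hβ : 0 < β) : c * Real.log β⁻¹ + (c - a) ≤ Real.negMulLog a := by
  rcases eq_or_lt_of_le hc with rfl | hc'
  · simp only [zero_mul, zero_sub, zero_add]
    have h0a : 0 ≤ a := hca
    have := Real.negMulLog_nonneg h0a ha
    linarith
  have ha0 : 0 < a := lt_of_lt_of_le hc' hca
  -- negMulLog a = -a log a ≥ -c log a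
  have h1 : -c * Real.log a ≤ Real.negMulLog a := by
    simp only [Real.negMulLog]
    have hla : Real.log a ≤ 0 := Real.log_nonpos (le_of_lt ha0) ha
    nlinarith
  -- -c log a ≥ -c log c + c - a
  have h2 : -c * Real.log c + (c - a) ≤ -c * Real.log a := by
    have h := Real.log_le_sub_one_of_pos (show (0:ℝ) < a / c by positivity)
    rw [Real.log_div (ne_of_gt ha0) (ne_of_gt hc')] at h
    have h3 : c * (Real.log a - Real.log c) ≤ c * (a / c - 1) :=
      mul_le_mul_of_nonneg_left h hc
    have h4 : c * (a / c) = a := by field_simp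
    nlinarith
  -- -c log c ≥ c log β⁻¹
  have h3 : c * Real.log β⁻¹ ≤ -c * Real.log c := by
    have hlog : Real.log c ≤ Real.log β := Real.log_le_log hc' hcβ
    rw [Real.log_inv]
    nlinarith
  linarith



noncomputable def phi (a : ℝ≥0∞) : ℝ≥0∞ := ENNReal.ofReal (Real.negMulLog a.toReal)

def cell (ℓ : ℕ) (i : ℤ) : Set ℝ := (fun x : ℝ => ⌊(ℓ : ℝ) * x⌋) ⁻¹' {i}

noncomputable def ent (μ : Measure ℝ) (ℓ : ℕ) : ℝ≥0∞ := ∑' i : ℤ, phi (μ (cell ℓ i))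

lemma measurable_floorMul (c : ℝ) : Measurable (fun x : ℝ => ⌊c * x⌋) :=
  (measurable_id.const_mul c).floor

lemma cell_measurable (ℓ : ℕ) (i : ℤ) : MeasurableSet (cell ℓ i) :=
  measurable_floorMul (ℓ : ℝ) (measurableSet_singleton i)

@[simp] lemma phi_zero : phi 0 = 0 := by simp [phi]

lemma phi_add_le {a b : ℝ≥0∞} (ha : a ≠ ⊤) (hb : b ≠ ⊤) : phi (a + b) ≤ phi a + phi b := by
  unfold phi
  rw [ENNReal.toReal_add ha hb]
  refine le_trans (ENNReal.ofReal_le_ofReal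
    (negMulLog_add_le ENNReal.toReal_nonneg ENNReal.toReal_nonneg)) ?_
  exact ENNReal.ofReal_add_le

lemma phi_le_one {a : ℝ≥0∞} (ha : a ≤ 1) : phi a ≤ 1 := by
  unfold phi
  rw [show (1 : ℝ≥0∞) = ENNReal.ofReal 1 by simp]
  exact ENNReal.ofReal_le_ofReal (negMulLog_le_one ENNReal.toReal_nonneg)

lemma ent_add_le (μ ν : Measure ℝ) [IsFiniteMeasure μ] [IsFiniteMeasure ν] (ℓ : ℕ) :
    ent (μ + ν) ℓ ≤ ent μ ℓ + ent ν ℓ := by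
  unfold ent
  rw [← ENNReal.tsum_add]
  refine ENNReal.tsum_le_tsum fun i => ?_
  rw [Measure.add_apply]
  exact phi_add_le (measure_ne_top μ _) (measure_ne_top ν _)

lemma ent_le_card {μ : Measure ℝ} (hμ1 : ∀ s, μ s ≤ 1) {F : Set ℝ} (hF : F.Finite)
    (h0 : μ Fᶜ = 0) (ℓ : ℕ) : ent μ ℓ ≤ (hF.toFinset.card : ℝ≥0∞) := by
  classical
  set G : Finset ℤ := hF.toFinset.image (fun x => ⌊(ℓ : ℝ) * x⌋) with hG
  have hvanish : ∀ i ∉ G, phi (μ (cell ℓ i)) = 0 := by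
    intro i hi
    have hsub : cell ℓ i ⊆ Fᶜ := by
      intro x hx
      intro hxF
      exact hi (Finset.mem_image.2 ⟨x, hF.mem_toFinset.2 hxF, hx⟩)
    have : μ (cell ℓ i) = 0 := le_antisymm (le_trans (measure_mono hsub) h0.le) zero_le
    simp [this]
  rw [ent, tsum_eq_sum hvanish]
  calc ∑ i ∈ G, phi (μ (cell ℓ i)) ≤ ∑ _i ∈ G, (1 : ℝ≥0∞) :=
        Finset.sum_le_sum fun i _ => phi_le_one (hμ1 _)
    _ = (G.card : ℝ≥0∞) := by simp
    _ ≤ (hF.toFinset.card : ℝ≥0∞) := by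
        exact_mod_cast Nat.cast_le.2 (Finset.card_image_le)



lemma cell_disjoint (ℓ : ℕ) {i j : ℤ} (hij : i ≠ j) : Disjoint (cell ℓ i) (cell ℓ j) := by
  rw [Set.disjoint_left]
  rintro x hx hy
  exact hij (hx.symm.trans hy)

lemma iUnion_cell (ℓ : ℕ) : (⋃ i : ℤ, cell ℓ i) = Set.univ := by
  ext x
  simp only [Set.mem_iUnion, Set.mem_univ, iff_true]
  exact ⟨⌊(ℓ : ℝ) * x⌋, rfl⟩

lemma cell_one_mem {x : ℝ} {m : ℤ} : x ∈ cell 1 m ↔ ⌊x⌋ = m := by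
  rw [cell, Set.mem_preimage, Set.mem_singleton_iff, Nat.cast_one, one_mul]

/-- decomposition of a unit cell into `ℓ` fine cells -/
lemma cell_one_eq_biUnion {ℓ : ℕ} (hℓ : 0 < ℓ) (m : ℤ) :
    cell 1 m = ⋃ t : Fin ℓ, cell ℓ (m * ℓ + (t : ℤ)) := by
  have hℓR : (0 : ℝ) < (ℓ : ℝ) := by exact_mod_cast hℓ
  ext x
  simp only [Set.mem_iUnion, cell, Set.mem_preimage, Set.mem_singleton_iff]
  constructor
  · intro hx
    rw [Nat.cast_one, one_mul] at hx
    have h1 : (m : ℝ) ≤ x := by rw [← hx]; exact Int.floor_le x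
    have h2 : x < (m : ℝ) + 1 := by rw [← hx]; exact Int.lt_floor_add_one x
    have hlo : (m * ℓ : ℤ) ≤ ⌊(ℓ : ℝ) * x⌋ := by
      rw [Int.le_floor]
      push_cast
      nlinarith
    have hhi : ⌊(ℓ : ℝ) * x⌋ < m * ℓ + ℓ := by
      rw [Int.floor_lt]
      push_cast
      nlinarith
    refine ⟨⟨(⌊(ℓ : ℝ) * x⌋ - m * ℓ).toNat, ?_⟩, ?_⟩
    · omega
    · simp only []
      omega
  · rintro ⟨t, ht⟩
    have htℓ : (t : ℤ) < (ℓ : ℤ) := by exact_mod_cast t.2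
    have h1 : ((m * ℓ + (t : ℤ) : ℤ) : ℝ) ≤ (ℓ : ℝ) * x := by rw [← ht]; exact Int.floor_le _
    have h2 : (ℓ : ℝ) * x < ((m * ℓ + (t : ℤ) : ℤ) : ℝ) + 1 := by
      rw [← ht]; exact Int.lt_floor_add_one _
    rw [Nat.cast_one, one_mul]
    rw [Int.floor_eq_iff]
    push_cast at h1 h2 ⊢
    constructor
    · nlinarith [(show (0:ℝ) ≤ (t:ℝ) by positivity)]
    · have : (t : ℝ) + 1 ≤ (ℓ : ℝ) := by exact_mod_cast htℓ
      nlinarith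

lemma measure_cell_one_eq_sum (μ : Measure ℝ) {ℓ : ℕ} (hℓ : 0 < ℓ) (m : ℤ) :
    μ (cell 1 m) = ∑ t : Fin ℓ, μ (cell ℓ (m * ℓ + (t : ℤ))) := by
  have hdisj : Pairwise (Function.onFun Disjoint fun t : Fin ℓ => cell ℓ (m * ℓ + (t : ℤ))) := by
    intro s t hst
    refine cell_disjoint ℓ ?_
    intro h
    apply hst
    have h2 : (s : ℤ) = (t : ℤ) := by omega
    exact Fin.ext (by exact_mod_cast h2)
  have hmeas : ∀ t : Fin ℓ, MeasurableSet (cell ℓ (m * ℓ + (t : ℤ))) := fun t =>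
    (measurable_id.const_mul ((ℓ : ℕ) : ℝ)).floor (measurableSet_singleton _)
  rw [cell_one_eq_biUnion hℓ m, measure_iUnion hdisj hmeas, tsum_fintype]


lemma tsum_measure_cell (μ : Measure ℝ) (ℓ : ℕ) : ∑' i : ℤ, μ (cell ℓ i) = μ Set.univ := by
  rw [← measure_iUnion (fun i j h => cell_disjoint ℓ h) (cell_measurable ℓ), iUnion_cell]

lemma phi_le_phi_add {a b : ℝ≥0∞} (hab : a ≤ b) (hb : b ≤ 1) : phi a ≤ phi b + b := by
  have hbt : b ≠ ⊤ := fun h => by simp [h] at hb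
  have hat : a ≠ ⊤ := fun h => hbt (top_le_iff.mp (h ▸ hab))
  have h1 : a.toReal ≤ b.toReal := ENNReal.toReal_le_toReal hat hbt |>.2 hab
  have h2 : b.toReal ≤ 1 := by
    rw [show (1:ℝ) = (1:ℝ≥0∞).toReal by simp]
    exact ENNReal.toReal_le_toReal hbt (by simp) |>.2 hb
  calc phi a ≤ ENNReal.ofReal (Real.negMulLog b.toReal + b.toReal) :=
        ENNReal.ofReal_le_ofReal (negMulLog_le_of_le ENNReal.toReal_nonneg h1 h2)
    _ ≤ phi b + ENNReal.ofReal b.toReal := ENNReal.ofReal_add_le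
    _ = phi b + b := by rw [ENNReal.ofReal_toReal hbt]

/-- comparison at scale 1: if `μ ≤ p` on unit cells and `p` has mass ≤ 1,
then `H₁(μ) ≤ H₁(p) + 1`. -/
lemma ent_one_le (μ p : Measure ℝ) (h : ∀ i : ℤ, μ (cell 1 i) ≤ p (cell 1 i))
    (hp1 : ∀ s, p s ≤ 1) : ent μ 1 ≤ ent p 1 + p Set.univ := by
  unfold ent
  rw [← tsum_measure_cell p 1, ← ENNReal.tsum_add]
  exact ENNReal.tsum_le_tsum fun i => phi_le_phi_add (h i) (hp1 _)

/-- grouping: `H_ℓ(μ) ≤ H₁(μ) + μ(univ) log ℓ`. -/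
lemma ent_le_coarse (μ : Measure ℝ) [IsFiniteMeasure μ] (hμ1 : ∀ s, μ s ≤ 1) {ℓ : ℕ}
    (hℓ : 0 < ℓ) : ent μ ℓ ≤ ent μ 1 + μ Set.univ * ENNReal.ofReal (Real.log ℓ) := by
  have : NeZero ℓ := ⟨by omega⟩
  have hre : ent μ ℓ = ∑' m : ℤ, ∑ t : Fin ℓ, phi (μ (cell ℓ (m * ℓ + (t : ℤ)))) := by
    rw [ent, ← ((Int.divModEquiv ℓ).symm.tsum_eq (fun i => phi (μ (cell ℓ i))))]
    have h1 : ∀ c : ℤ × Fin ℓ, phi (μ (cell ℓ ((Int.divModEquiv ℓ).symm c)))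
        = (fun (m : ℤ) (t : Fin ℓ) => phi (μ (cell ℓ (m * ℓ + (t : ℤ))))) c.1 c.2 :=
      fun c => rfl
    calc ∑' c : ℤ × Fin ℓ, phi (μ (cell ℓ ((Int.divModEquiv ℓ).symm c)))
        = ∑' c : ℤ × Fin ℓ,
            (fun (m : ℤ) (t : Fin ℓ) => phi (μ (cell ℓ (m * ℓ + (t : ℤ))))) c.1 c.2 :=
          tsum_congr h1
      _ = ∑' m : ℤ, ∑' t : Fin ℓ, phi (μ (cell ℓ (m * ℓ + (t : ℤ)))) := ENNReal.tsum_prod'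
      _ = ∑' m : ℤ, ∑ t : Fin ℓ, phi (μ (cell ℓ (m * ℓ + (t : ℤ)))) :=
          tsum_congr (fun m => tsum_fintype _)
  rw [hre]
  have key : ∀ m : ℤ, ∑ t : Fin ℓ, phi (μ (cell ℓ (m * ℓ + (t : ℤ))))
      ≤ phi (μ (cell 1 m)) + μ (cell 1 m) * ENNReal.ofReal (Real.log ℓ) := by
    intro m
    set r : Fin ℓ → ℝ := fun t => (μ (cell ℓ (m * ℓ + (t : ℤ)))).toReal with hr
    have hrnn : ∀ t, 0 ≤ r t := fun t => ENNReal.toReal_nonneg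
    have hq : (μ (cell 1 m)).toReal = ∑ t : Fin ℓ, r t := by
      rw [measure_cell_one_eq_sum μ hℓ m, ENNReal.toReal_sum (fun t _ => measure_ne_top μ _)]
    have hsum : ∑ t : Fin ℓ, phi (μ (cell ℓ (m * ℓ + (t : ℤ))))
        = ENNReal.ofReal (∑ t : Fin ℓ, Real.negMulLog (r t)) := by
      rw [ENNReal.ofReal_sum_of_nonneg (fun t _ => Real.negMulLog_nonneg (hrnn t) ?_)]
      · rfl
      · rw [show (1:ℝ) = (1:ℝ≥0∞).toReal by simp]
        exact ENNReal.toReal_le_toReal (measure_ne_top μ _) (by simp) |>.2 (hμ1 _)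
    rw [hsum]
    have hgroup := sum_negMulLog_le Finset.univ r (fun t _ => hrnn t)
    rw [Finset.card_univ, Fintype.card_fin] at hgroup
    calc ENNReal.ofReal (∑ t : Fin ℓ, Real.negMulLog (r t))
        ≤ ENNReal.ofReal (Real.negMulLog (∑ t, r t) + (∑ t, r t) * Real.log ℓ) :=
          ENNReal.ofReal_le_ofReal hgroup
      _ ≤ ENNReal.ofReal (Real.negMulLog (∑ t, r t))
            + ENNReal.ofReal ((∑ t, r t) * Real.log ℓ) := ENNReal.ofReal_add_le
      _ = phi (μ (cell 1 m)) + μ (cell 1 m) * ENNReal.ofReal (Real.log ℓ) := by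
          rw [← hq, phi, ENNReal.ofReal_mul ENNReal.toReal_nonneg,
            ENNReal.ofReal_toReal (measure_ne_top μ _)]
  calc ∑' m : ℤ, ∑ t : Fin ℓ, phi (μ (cell ℓ (m * ℓ + (t : ℤ))))
      ≤ ∑' m : ℤ, (phi (μ (cell 1 m)) + μ (cell 1 m) * ENNReal.ofReal (Real.log ℓ)) :=
        ENNReal.tsum_le_tsum key
    _ = ent μ 1 + (∑' m : ℤ, μ (cell 1 m)) * ENNReal.ofReal (Real.log ℓ) := by
        rw [ENNReal.tsum_add, ENNReal.tsum_mul_right]; rfl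
    _ = ent μ 1 + μ Set.univ * ENNReal.ofReal (Real.log ℓ) := by
        rw [tsum_measure_cell]

lemma cell_eq_Ico {ℓ : ℕ} (hℓ : 0 < ℓ) (i : ℤ) :
    cell ℓ i = Set.Ico ((i : ℝ) / ℓ) (((i : ℝ) + 1) / ℓ) := by
  have hℓR : (0 : ℝ) < (ℓ : ℝ) := by exact_mod_cast hℓ
  ext x
  simp only [cell, Set.mem_preimage, Set.mem_singleton_iff, Set.mem_Ico, Int.floor_eq_iff]
  rw [div_le_iff₀ hℓR, lt_div_iff₀ hℓR]
  constructor <;> intro ⟨h1, h2⟩ <;> constructor <;> nlinarith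

lemma volume_cell {ℓ : ℕ} (hℓ : 0 < ℓ) (i : ℤ) :
    volume (cell ℓ i) = ENNReal.ofReal (1 / ℓ) := by
  have hℓR : (0 : ℝ) < (ℓ : ℝ) := by exact_mod_cast hℓ
  rw [cell_eq_Ico hℓ i, Real.volume_Ico]
  congr 1
  field_simp
  ring

lemma tendsto_log_nat : Tendsto (fun ℓ : ℕ => Real.log ℓ) atTop atTop :=
  Real.tendsto_log_atTop.comp tendsto_natCast_atTop_atTop

lemma eventually_log_pos : ∀ᶠ ℓ : ℕ in atTop, 0 < Real.log ℓ :=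
  tendsto_log_nat.eventually_gt_atTop 0

lemma limsup_le_of_linear {f : ℕ → ℝ} (h0 : ∀ᶠ ℓ : ℕ in atTop, 0 ≤ f ℓ) {C a : ℝ}
    (h : ∀ᶠ ℓ : ℕ in atTop, f ℓ ≤ C + a * Real.log ℓ) :
    limsup (fun ℓ : ℕ => f ℓ / Real.log ℓ) atTop ≤ a := by
  have hg : Tendsto (fun ℓ : ℕ => C / Real.log ℓ + a) atTop (nhds (0 + a)) :=
    (tendsto_const_nhds.div_atTop tendsto_log_nat).add tendsto_const_nhds
  have hev : ∀ᶠ ℓ : ℕ in atTop, f ℓ / Real.log ℓ ≤ C / Real.log ℓ + a := by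
    filter_upwards [h, eventually_log_pos] with ℓ hf hL
    rw [div_add' _ _ _ (ne_of_gt hL), div_le_div_iff_of_pos_right hL]
    linarith
  have h0' : ∀ᶠ ℓ : ℕ in atTop, (0:ℝ) ≤ f ℓ / Real.log ℓ := by
    filter_upwards [h0, eventually_log_pos] with ℓ hf hL
    positivity
  calc limsup (fun ℓ : ℕ => f ℓ / Real.log ℓ) atTop
      ≤ limsup (fun ℓ : ℕ => C / Real.log ℓ + a) atTop :=
        limsup_le_limsup hev (isCoboundedUnder_le_of_eventually_le _ h0')
          hg.isBoundedUnder_le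
    _ = 0 + a := hg.limsup_eq
    _ = a := zero_add a

lemma le_liminf_of_linear {f : ℕ → ℝ} {C a B : ℝ}
    (h : ∀ᶠ ℓ : ℕ in atTop, a * Real.log ℓ - C ≤ f ℓ)
    (hub : ∀ᶠ ℓ : ℕ in atTop, f ℓ / Real.log ℓ ≤ B) :
    a ≤ liminf (fun ℓ : ℕ => f ℓ / Real.log ℓ) atTop := by
  have hg : Tendsto (fun ℓ : ℕ => a - C / Real.log ℓ) atTop (nhds (a - 0)) :=
    tendsto_const_nhds.sub (tendsto_const_nhds.div_atTop tendsto_log_nat)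
  have hev : ∀ᶠ ℓ : ℕ in atTop, a - C / Real.log ℓ ≤ f ℓ / Real.log ℓ := by
    filter_upwards [h, eventually_log_pos] with ℓ hf hL
    have heq : a - C / Real.log ℓ = (a * Real.log ℓ - C) / Real.log ℓ := by field_simp
    rw [heq, div_le_div_iff_of_pos_right hL]
    exact hf
  calc a = a - 0 := (sub_zero a).symm
    _ = liminf (fun ℓ : ℕ => a - C / Real.log ℓ) atTop := hg.liminf_eq.symm
    _ ≤ liminf (fun ℓ : ℕ => f ℓ / Real.log ℓ) atTop :=
        liminf_le_liminf hev hg.isBoundedUnder_ge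
          (isCoboundedUnder_ge_of_eventually_le _ hub)

lemma measure_le_of_eq_add (p μ ν : Measure ℝ) (hp : p = μ + ν) (s : Set ℝ) : μ s ≤ p s := by
  rw [hp, Measure.add_apply]; exact le_self_add

/-- component bound: if `μ ≤ p` (via decomposition) then
`H_ℓ(μ) ≤ H₁(p) + 1 + μ(univ)·log ℓ`. -/
lemma ent_component_le (p μ : Measure ℝ) [IsProbabilityMeasure p]
    (hle : ∀ s : Set ℝ, μ s ≤ p s) {ℓ : ℕ} (hℓ : 0 < ℓ) :
    ent μ ℓ ≤ (ent p 1 + 1) + μ Set.univ * ENNReal.ofReal (Real.log ℓ) := by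
  have hμ1 : ∀ s, μ s ≤ 1 := fun s => le_trans (hle s) (prob_le_one)
  haveI : IsFiniteMeasure μ := ⟨lt_of_le_of_lt (hμ1 _) ENNReal.one_lt_top⟩
  calc ent μ ℓ ≤ ent μ 1 + μ Set.univ * ENNReal.ofReal (Real.log ℓ) :=
        ent_le_coarse μ hμ1 hℓ
    _ ≤ (ent p 1 + p Set.univ) + μ Set.univ * ENNReal.ofReal (Real.log ℓ) := by
        gcongr
        exact ent_one_le μ p (fun i => hle _) (fun s => prob_le_one)
    _ = (ent p 1 + 1) + μ Set.univ * ENNReal.ofReal (Real.log ℓ) := by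
        rw [measure_univ]

lemma main_upper (p : Measure ℝ) [IsProbabilityMeasure p] (h1 : ent p 1 ≠ ⊤)
    (μ1 μ2 μ3 : Measure ℝ) (hp : p = μ1 + μ2 + μ3)
    {F : Set ℝ} (hF : F.Finite) (hμ1F : μ1 Fᶜ = 0)
    {a : ℝ} (ha0 : 0 ≤ a) (hmass : μ2 Set.univ + μ3 Set.univ ≤ ENNReal.ofReal a) :
    limsup (fun ℓ : ℕ => (ent p ℓ).toReal / Real.log ℓ) atTop ≤ a := by
  have hle1 : ∀ s, μ1 s ≤ p s := fun s => by
    rw [hp]; simp only [Measure.add_apply]; exact le_add_right le_self_add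
  have hle2 : ∀ s, μ2 s ≤ p s := fun s => by
    rw [hp]; simp only [Measure.add_apply]; exact le_add_right le_add_self
  have hle3 : ∀ s, μ3 s ≤ p s := fun s => by
    rw [hp]; simp only [Measure.add_apply]; exact le_add_left (le_refl _)
  have hμ11 : ∀ s, μ1 s ≤ 1 := fun s => le_trans (hle1 s) prob_le_one
  haveI i1 : IsFiniteMeasure μ1 := ⟨lt_of_le_of_lt (hμ11 _) ENNReal.one_lt_top⟩
  haveI i2 : IsFiniteMeasure μ2 :=
    ⟨lt_of_le_of_lt (le_trans (hle2 _) prob_le_one) ENNReal.one_lt_top⟩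
  haveI i3 : IsFiniteMeasure μ3 :=
    ⟨lt_of_le_of_lt (le_trans (hle3 _) prob_le_one) ENNReal.one_lt_top⟩
  set C : ℝ≥0∞ := (hF.toFinset.card : ℝ≥0∞) + 2 * (ent p 1 + 1) with hC
  have hCne : C ≠ ⊤ := by
    rw [hC]
    refine ENNReal.add_ne_top.2 ⟨ENNReal.natCast_ne_top _, ?_⟩
    exact ENNReal.mul_ne_top (by norm_num) (ENNReal.add_ne_top.2 ⟨h1, by norm_num⟩)
  have key : ∀ ℓ : ℕ, 0 < ℓ →
      ent p ℓ ≤ C + ENNReal.ofReal a * ENNReal.ofReal (Real.log ℓ) := by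
    intro ℓ hℓ
    have step1 : ent p ℓ ≤ ent μ1 ℓ + ent μ2 ℓ + ent μ3 ℓ := by
      rw [hp]
      refine le_trans (ent_add_le (μ1 + μ2) μ3 ℓ) ?_
      gcongr
      exact ent_add_le μ1 μ2 ℓ
    have b1 : ent μ1 ℓ ≤ (hF.toFinset.card : ℝ≥0∞) := ent_le_card hμ11 hF hμ1F ℓ
    have b2 := ent_component_le p μ2 hle2 hℓ
    have b3 := ent_component_le p μ3 hle3 hℓ
    calc ent p ℓ ≤ (hF.toFinset.card : ℝ≥0∞)
          + ((ent p 1 + 1) + μ2 Set.univ * ENNReal.ofReal (Real.log ℓ))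
          + ((ent p 1 + 1) + μ3 Set.univ * ENNReal.ofReal (Real.log ℓ)) := by
          refine le_trans step1 ?_; gcongr
      _ = C + (μ2 Set.univ + μ3 Set.univ) * ENNReal.ofReal (Real.log ℓ) := by
          rw [hC]; ring
      _ ≤ C + ENNReal.ofReal a * ENNReal.ofReal (Real.log ℓ) := by gcongr
  refine limsup_le_of_linear (Eventually.of_forall fun ℓ => ENNReal.toReal_nonneg)
    (C := C.toReal) ?_
  filter_upwards [eventually_ge_atTop 1] with ℓ hℓ
  have h := key ℓ hℓ
  have hlogℓ : 0 ≤ Real.log ℓ := Real.log_nonneg (by exact_mod_cast hℓ)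
  have hrhs : (C + ENNReal.ofReal a * ENNReal.ofReal (Real.log ℓ)).toReal
      = C.toReal + a * Real.log ℓ := by
    rw [ENNReal.toReal_add hCne (ENNReal.mul_ne_top ENNReal.ofReal_ne_top
      ENNReal.ofReal_ne_top), ENNReal.toReal_mul, ENNReal.toReal_ofReal ha0,
      ENNReal.toReal_ofReal hlogℓ]
  calc (ent p ℓ).toReal ≤ (C + ENNReal.ofReal a * ENNReal.ofReal (Real.log ℓ)).toReal :=
        ENNReal.toReal_mono (ENNReal.add_ne_top.2
          ⟨hCne, ENNReal.mul_ne_top ENNReal.ofReal_ne_top ENNReal.ofReal_ne_top⟩) h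
    _ ≤ C.toReal + a * Real.log ℓ := hrhs.le

lemma ent_ne_top (p : Measure ℝ) [IsProbabilityMeasure p] (h1 : ent p 1 ≠ ⊤) {ℓ : ℕ}
    (hℓ : 0 < ℓ) : ent p ℓ ≠ ⊤ := by
  refine ne_top_of_le_ne_top ?_ (ent_le_coarse p (fun s => prob_le_one) hℓ)
  rw [measure_univ, one_mul]
  exact ENNReal.add_ne_top.2 ⟨h1, ENNReal.ofReal_ne_top⟩

lemma eventually_one_le_log : ∀ᶠ ℓ : ℕ in atTop, 1 ≤ Real.log ℓ :=
  tendsto_log_nat.eventually_ge_atTop 1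

lemma hub (p : Measure ℝ) [IsProbabilityMeasure p] (h1 : ent p 1 ≠ ⊤) :
    ∀ᶠ ℓ : ℕ in atTop, (ent p ℓ).toReal / Real.log ℓ ≤ (ent p 1).toReal + 1 := by
  filter_upwards [eventually_one_le_log, eventually_ge_atTop 1] with ℓ hlog hℓ
  have hlpos : 0 < Real.log ℓ := lt_of_lt_of_le one_pos hlog
  have hnum : (ent p ℓ).toReal ≤ (ent p 1).toReal + Real.log ℓ := by
    have h := ent_le_coarse p (fun s => prob_le_one) (show 0 < ℓ by omega)
    rw [measure_univ, one_mul] at h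
    calc (ent p ℓ).toReal ≤ (ent p 1 + ENNReal.ofReal (Real.log ℓ)).toReal :=
          ENNReal.toReal_mono (ENNReal.add_ne_top.2 ⟨h1, ENNReal.ofReal_ne_top⟩) h
      _ = (ent p 1).toReal + Real.log ℓ := by
          rw [ENNReal.toReal_add h1 ENNReal.ofReal_ne_top,
            ENNReal.toReal_ofReal (by linarith)]
  rw [div_le_iff₀ hlpos]
  have hE : 0 ≤ (ent p 1).toReal := ENNReal.toReal_nonneg
  nlinarith

lemma ent_toReal_eq_tsum (p : Measure ℝ) (hp1 : ∀ s, p s ≤ 1) (ℓ : ℕ) :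
    (ent p ℓ).toReal = ∑' i : ℤ, Real.negMulLog ((p (cell ℓ i)).toReal) := by
  rw [ent]
  simp only [phi]
  rw [ENNReal.tsum_toReal_eq (fun i => ENNReal.ofReal_ne_top)]
  refine tsum_congr fun i => ?_
  rw [ENNReal.toReal_ofReal]
  refine Real.negMulLog_nonneg ENNReal.toReal_nonneg ?_
  rw [show (1:ℝ) = (1:ℝ≥0∞).toReal by simp]
  exact ENNReal.toReal_le_toReal (ne_top_of_le_ne_top (by simp) (hp1 _)) (by simp) |>.2 (hp1 _)

lemma summable_negMulLog_cell (p : Measure ℝ) (hp1 : ∀ s, p s ≤ 1) {ℓ : ℕ}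
    (hfin : ent p ℓ ≠ ⊤) :
    Summable (fun i : ℤ => Real.negMulLog ((p (cell ℓ i)).toReal)) := by
  have := ENNReal.summable_toReal (by rw [← ent]; exact hfin :
    ∑' i : ℤ, phi (p (cell ℓ i)) ≠ ⊤)
  refine this.congr fun i => ?_
  rw [phi, ENNReal.toReal_ofReal]
  refine Real.negMulLog_nonneg ENNReal.toReal_nonneg ?_
  rw [show (1:ℝ) = (1:ℝ≥0∞).toReal by simp]
  exact ENNReal.toReal_le_toReal (ne_top_of_le_ne_top (by simp) (hp1 _)) (by simp) |>.2 (hp1 _)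

lemma summable_measure_cell_toReal (μ : Measure ℝ) [IsFiniteMeasure μ] (ℓ : ℕ) :
    Summable (fun i : ℤ => (μ (cell ℓ i)).toReal) := by
  apply ENNReal.summable_toReal
  rw [tsum_measure_cell]
  exact measure_ne_top μ _

lemma tsum_measure_cell_toReal (μ : Measure ℝ) [IsFiniteMeasure μ] (ℓ : ℕ) :
    ∑' i : ℤ, (μ (cell ℓ i)).toReal = (μ Set.univ).toReal := by
  rw [← ENNReal.tsum_toReal_eq (fun i => measure_ne_top μ _), tsum_measure_cell]

lemma main_lower (p : Measure ℝ) [IsProbabilityMeasure p] (h1 : ent p 1 ≠ ⊤)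
    (ν : Measure ℝ) [IsProbabilityMeasure ν] (hac : ν ≪ volume)
    {e : ℝ} (he : 0 < e) (he1 : e ≤ 1)
    (hle : ∀ s : Set ℝ, MeasurableSet s → ENNReal.ofReal e * ν s ≤ p s)
    {η : ℝ} (hη : 0 < η) (hη1 : η < 1) :
    e - η ≤ liminf (fun ℓ : ℕ => (ent p ℓ).toReal / Real.log ℓ) atTop := by
  classical
  set f := ν.rnDeriv volume with hfdef
  have hwd : volume.withDensity f = ν := Measure.withDensity_rnDeriv_eq ν volume hac
  set A : ℕ → Set ℝ := fun n => {x | f x ≤ (n : ℝ≥0∞)} with hA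
  have hAmeas : ∀ n, MeasurableSet (A n) :=
    fun n => measurableSet_le (Measure.measurable_rnDeriv ν volume) measurable_const
  have hAmono : Monotone A := by
    intro m n hmn x hx
    have hx' : f x ≤ (m : ℝ≥0∞) := hx
    show f x ≤ (n : ℝ≥0∞)
    exact le_trans hx' ((Nat.cast_le (α := ℝ≥0∞)).mpr hmn)
  have hcompl : ν (⋃ n, A n)ᶜ = 0 := by
    have hsub : (⋃ n, A n)ᶜ ⊆ {x : ℝ | ¬ f x < ⊤} := by
      intro x hx
      simp only [Set.mem_compl_iff, Set.mem_iUnion, not_exists, hA, Set.mem_setOf_eq] at hx ⊢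
      intro hlt
      obtain ⟨n, hn⟩ := ENNReal.exists_nat_gt hlt.ne
      exact hx n (le_of_lt hn)
    have h0 : volume {x : ℝ | ¬ f x < ⊤} = 0 := ae_iff.mp (Measure.rnDeriv_lt_top ν volume)
    have h0' : ν {x : ℝ | ¬ f x < ⊤} = 0 := hac h0
    exact le_antisymm (le_trans (measure_mono hsub) h0'.le) zero_le
  have hUnion : ν (⋃ n, A n) = 1 := by
    have h2 : ν Set.univ ≤ ν (⋃ n, A n) + ν (⋃ n, A n)ᶜ := by
      rw [← Set.union_compl_self (⋃ n, A n)]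
      exact measure_union_le _ _
    rw [measure_univ, hcompl, add_zero] at h2
    exact le_antisymm prob_le_one h2
  have hten : Tendsto (fun n => ν (A n)) atTop (nhds 1) := by
    have := tendsto_measure_iUnion_atTop (μ := ν) hAmono
    rwa [hUnion] at this
  have hηE : (0 : ℝ≥0∞) < ENNReal.ofReal η := ENNReal.ofReal_pos.2 hη
  have hlt : (1 : ℝ≥0∞) - ENNReal.ofReal η < 1 :=
    ENNReal.sub_lt_self (by simp) (by simp) (ne_of_gt hηE)
  obtain ⟨M, hMA, hM1⟩ := ((hten.eventually_const_lt hlt).and (eventually_ge_atTop 1)).exists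
  set Aset := A M with hAset
  set W := e * (ν Aset).toReal with hWdef
  have hMR : (1:ℝ) ≤ (M:ℝ) := by exact_mod_cast hM1
  have hWlb : e - η ≤ W := by
    have h1' : 1 - η ≤ (ν Aset).toReal := by
      have hmono := ENNReal.toReal_mono (measure_ne_top ν Aset) hMA.le
      rw [ENNReal.toReal_sub_of_le (ENNReal.ofReal_le_one.2 hη1.le) (by simp),
        ENNReal.toReal_one, ENNReal.toReal_ofReal hη.le] at hmono
      exact hmono
    nlinarith
  have hW0 : 0 ≤ W := by positivity
  have key : ∀ ℓ : ℕ, 1 ≤ ℓ →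
      W * Real.log ℓ - (W * Real.log (e * M) + 1 - W) ≤ (ent p ℓ).toReal := by
    intro ℓ hℓ1
    have hℓ : 0 < ℓ := hℓ1
    have hℓR : (0:ℝ) < (ℓ:ℝ) := by exact_mod_cast hℓ
    set μA : Measure ℝ := ENNReal.ofReal e • (ν.restrict Aset) with hμA
    haveI : IsFiniteMeasure μA := by
      constructor
      rw [hμA, Measure.smul_apply, smul_eq_mul]
      rw [lt_top_iff_ne_top]
      exact ENNReal.mul_ne_top ENNReal.ofReal_ne_top (measure_ne_top _ _)
    set c : ℤ → ℝ := fun i => (μA (cell ℓ i)).toReal with hc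
    set aR : ℤ → ℝ := fun i => (p (cell ℓ i)).toReal with haR
    have hca : ∀ i, c i ≤ aR i := by
      intro i
      apply ENNReal.toReal_mono (measure_ne_top p _)
      rw [hμA, Measure.smul_apply, smul_eq_mul, Measure.restrict_apply (cell_measurable ℓ i)]
      refine le_trans ?_ (hle _ (cell_measurable ℓ i))
      exact mul_le_mul_right (measure_mono Set.inter_subset_left) _
    have ha1 : ∀ i, aR i ≤ 1 := by
      intro i
      rw [haR, show (1:ℝ) = (1:ℝ≥0∞).toReal by simp]
      exact ENNReal.toReal_le_toReal (measure_ne_top p _) (by simp) |>.2 prob_le_one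
    set β : ℝ := e * M / ℓ with hβ
    have hβpos : 0 < β := by
      rw [hβ]
      have : (0:ℝ) < (M:ℝ) := by linarith
      positivity
    have hcβ : ∀ i, c i ≤ β := by
      intro i
      have hbound : μA (cell ℓ i)
          ≤ ENNReal.ofReal e * ((M : ℝ≥0∞) * ENNReal.ofReal (1 / ℓ)) := by
        rw [hμA, Measure.smul_apply, smul_eq_mul,
          Measure.restrict_apply (cell_measurable ℓ i)]
        refine mul_le_mul_right ?_ _
        have hint : ν (cell ℓ i ∩ Aset) = ∫⁻ x in cell ℓ i ∩ Aset, f x ∂volume := by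
          conv_lhs => rw [← hwd]
          rw [withDensity_apply f ((cell_measurable ℓ i).inter (hAmeas M))]
        rw [hint]
        calc ∫⁻ x in cell ℓ i ∩ Aset, f x ∂volume
            ≤ ∫⁻ _x in cell ℓ i ∩ Aset, (M : ℝ≥0∞) ∂volume :=
              setLIntegral_mono measurable_const (fun x hx => hx.2)
          _ = (M : ℝ≥0∞) * volume (cell ℓ i ∩ Aset) := setLIntegral_const _ _
          _ ≤ (M : ℝ≥0∞) * volume (cell ℓ i) := by
              gcongr
              exact Set.inter_subset_left
          _ = (M : ℝ≥0∞) * ENNReal.ofReal (1 / ℓ) := by rw [volume_cell hℓ]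
      have hmono := ENNReal.toReal_mono
        (ENNReal.mul_ne_top ENNReal.ofReal_ne_top
          (ENNReal.mul_ne_top (ENNReal.natCast_ne_top M) ENNReal.ofReal_ne_top)) hbound
      rw [ENNReal.toReal_mul, ENNReal.toReal_mul, ENNReal.toReal_ofReal he.le,
        ENNReal.toReal_ofReal (by positivity : (0:ℝ) ≤ 1/(ℓ:ℝ)),
        ENNReal.toReal_natCast] at hmono
      calc c i ≤ e * ((M:ℝ) * (1/ℓ)) := hmono
        _ = β := by rw [hβ]; ring
    have hterm : ∀ i, c i * Real.log β⁻¹ + (c i - aR i) ≤ Real.negMulLog (aR i) :=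
      fun i => lower_core ENNReal.toReal_nonneg (hca i) (ha1 i) (hcβ i) hβpos
    have hfinℓ : ent p ℓ ≠ ⊤ := ent_ne_top p h1 hℓ
    have hsum_a : Summable aR := summable_measure_cell_toReal p ℓ
    have hsum_c : Summable c := summable_measure_cell_toReal μA ℓ
    have hsum_lhs : Summable (fun i => c i * Real.log β⁻¹ + (c i - aR i)) :=
      (hsum_c.mul_right _).add (hsum_c.sub hsum_a)
    have hsum_rhs : Summable (fun i => Real.negMulLog (aR i)) :=
      summable_negMulLog_cell p (fun s => prob_le_one) hfinℓ
    have htsum := Summable.tsum_le_tsum hterm hsum_lhs hsum_rhs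
    have hta : ∑' i, aR i = 1 := by
      rw [haR, tsum_measure_cell_toReal]
      simp
    have htc : ∑' i, c i = W := by
      rw [hc, tsum_measure_cell_toReal, hμA, Measure.smul_apply, smul_eq_mul,
        Measure.restrict_apply MeasurableSet.univ, Set.univ_inter, ENNReal.toReal_mul,
        ENNReal.toReal_ofReal he.le, hWdef]
    have hlhs : ∑' i, (c i * Real.log β⁻¹ + (c i - aR i)) = W * Real.log β⁻¹ + (W - 1) := by
      rw [Summable.tsum_add (hsum_c.mul_right _) (hsum_c.sub hsum_a), tsum_mul_right, htc,
        Summable.tsum_sub hsum_c hsum_a, htc, hta]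
    have hrhs : ∑' i, Real.negMulLog (aR i) = (ent p ℓ).toReal :=
      (ent_toReal_eq_tsum p (fun s => prob_le_one) ℓ).symm
    rw [hlhs, hrhs] at htsum
    have hlogβ : Real.log β⁻¹ = Real.log ℓ - Real.log (e * M) := by
      rw [Real.log_inv, hβ, Real.log_div (by positivity) (ne_of_gt hℓR)]
      ring
    rw [hlogβ] at htsum
    nlinarith [htsum]
  have hWle : W ≤ liminf (fun ℓ : ℕ => (ent p ℓ).toReal / Real.log ℓ) atTop := by
    refine le_liminf_of_linear (C := W * Real.log (e * M) + 1 - W) ?_ (hub p h1)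
    filter_upwards [eventually_ge_atTop 1] with ℓ hℓ
    exact key ℓ hℓ
  linarith

lemma exists_finite_compl_small (ν : Measure ℝ) [IsProbabilityMeasure ν]
    {S : Set ℝ} (hS : S.Countable) (hν : ν Sᶜ = 0) {δ : ℝ} (hδ : 0 < δ) :
    ∃ F : Set ℝ, F.Finite ∧ ν Fᶜ ≤ ENNReal.ofReal δ := by
  classical
  rcases S.eq_empty_or_nonempty with rfl | hne
  · exfalso
    have : ν Set.univ = 0 := by simpa using hν
    rw [measure_univ] at this
    exact one_ne_zero this
  obtain ⟨g, hg⟩ := Set.Countable.exists_eq_range hS hne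
  set Fn : ℕ → Set ℝ := fun n => g '' (Set.Iic n) with hFn
  have hmono : Monotone Fn := fun m n hmn => Set.image_mono (f := g) (Set.Iic_subset_Iic.2 hmn)
  have hun : (⋃ n, Fn n) = S := by
    rw [hg, hFn]
    ext x
    simp only [Set.mem_iUnion, Set.mem_image, Set.mem_Iic, Set.mem_range]
    constructor
    · rintro ⟨n, k, _, rfl⟩; exact ⟨k, rfl⟩
    · rintro ⟨k, rfl⟩; exact ⟨k, k, le_refl k, rfl⟩
  have hS1 : ν S = 1 := by
    have h2 : ν Set.univ ≤ ν S + ν Sᶜ := by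
      rw [← Set.union_compl_self S]; exact measure_union_le _ _
    rw [measure_univ, hν, add_zero] at h2
    exact le_antisymm prob_le_one h2
  have hten : Tendsto (fun n => ν (Fn n)) atTop (nhds 1) := by
    have := tendsto_measure_iUnion_atTop (μ := ν) hmono
    rwa [hun, hS1] at this
  have hlt : (1 : ℝ≥0∞) - ENNReal.ofReal δ < 1 := by
    rcases le_or_gt 1 (ENNReal.ofReal δ) with h | h
    · rw [tsub_eq_zero_of_le h]; exact one_pos
    · exact ENNReal.sub_lt_self (by simp) (by simp) (ne_of_gt (ENNReal.ofReal_pos.2 hδ))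
  obtain ⟨n, hn⟩ := (hten.eventually_const_lt hlt).exists
  refine ⟨Fn n, (Set.finite_Iic n).image g, ?_⟩
  have hFnm : MeasurableSet (Fn n) := ((Set.finite_Iic n).image g).measurableSet
  rw [measure_compl hFnm (measure_ne_top ν _), measure_univ]
  rw [tsub_le_iff_right]
  rcases le_or_gt 1 (ENNReal.ofReal δ) with h | h
  · exact le_trans h le_self_add
  · calc (1:ℝ≥0∞) = 1 - ENNReal.ofReal δ + ENNReal.ofReal δ :=
        (tsub_add_cancel_of_le h.le).symm
      _ ≤ ENNReal.ofReal δ + ν (Fn n) := by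
          rw [add_comm]
          exact add_le_add_right hn.le _


/-- bridge to the `DJM` definition of Shannon entropy. -/
lemma bridge (μ : Measure ℝ) (ℓ : ℕ) :
    DJM.shannonEntropy (μ.map (fun x : ℝ => ⌊(ℓ : ℝ) * x⌋)) = ent μ ℓ := by
  unfold DJM.shannonEntropy ent
  congr 1
  ext i
  rw [Measure.map_apply (measurable_floorMul _) (measurableSet_singleton i)]
  rfl

lemma bridge_one (p : Measure ℝ) :
    DJM.shannonEntropy (p.map (fun x : ℝ => ⌊x⌋)) = ent p 1 := by
  have hfun : (fun x : ℝ => ⌊((1 : ℕ) : ℝ) * x⌋) = fun x : ℝ => ⌊x⌋ := by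
    funext x
    norm_num
  rw [← hfun]
  exact bridge p 1

lemma le_of_forall_pos_le_add' {a b : ℝ} (h : ∀ δ : ℝ, 0 < δ → a ≤ b + δ) : a ≤ b := by
  by_contra hlt
  push_neg at hlt
  have := h ((a - b) / 2) (by linarith)
  linarith

end DJMAux

open DJMAux

/-- Proposition 1 of the paper. Let `p` be a probability measure on `ℝ`
with `H(⌊X⌋) < ∞`. If `p = (1-ε)ν_d + εν̃` with `ν_d` discrete, then `d̄(p) ≤ ε`; if
moreover `ν̃` is absolutely continuous w.r.t. Lebesgue measure, then `d̲(p) = d̄(p) = ε`.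
In particular, if `P(X ≠ 0) ≤ ε` then `d̄(p) ≤ ε`. -/
theorem statement5 (p : Measure ℝ) [IsProbabilityMeasure p]
    (hH : shannonEntropy (p.map (fun x : ℝ => ⌊x⌋)) ≠ ⊤)
    (ε : ℝ) (hε0 : 0 ≤ ε) (hε1 : ε ≤ 1) :
    (∀ νd νt : Measure ℝ, IsProbabilityMeasure νd → IsProbabilityMeasure νt →
      (∃ S : Set ℝ, S.Countable ∧ νd Sᶜ = 0) →
      p = ENNReal.ofReal (1 - ε) • νd + ENNReal.ofReal ε • νt →
      infoDimUpper p ≤ ε ∧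
        (νt ≪ volume → infoDimLower p = ε ∧ infoDimUpper p = ε)) ∧
    (p {x : ℝ | x ≠ 0} ≤ ENNReal.ofReal ε → infoDimUpper p ≤ ε) := by
  classical
  have hent1 : ent p 1 ≠ ⊤ := by rwa [bridge_one p] at hH
  have hfuneq : (fun ℓ : ℕ => (shannonEntropy (p.map fun x : ℝ => ⌊(ℓ : ℝ) * x⌋)).toReal
        / Real.log ℓ)
      = fun ℓ : ℕ => (ent p ℓ).toReal / Real.log ℓ := by
    funext ℓ
    rw [bridge]
  have hupU : infoDimUpper p
      = limsup (fun ℓ : ℕ => (ent p ℓ).toReal / Real.log ℓ) atTop := by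
    rw [infoDimUpper, hfuneq]
  have hlowL : infoDimLower p
      = liminf (fun ℓ : ℕ => (ent p ℓ).toReal / Real.log ℓ) atTop := by
    rw [infoDimLower, hfuneq]
  constructor
  · rintro νd νt hPd hPt ⟨S, hS, hSc⟩ hdecomp
    haveI := hPd
    haveI := hPt
    have hupper : infoDimUpper p ≤ ε := by
      rw [hupU]
      refine le_of_forall_pos_le_add' fun δ hδ => ?_
      obtain ⟨F, hFfin, hFc⟩ := exists_finite_compl_small νd hS hSc hδ
      set μ1 := ENNReal.ofReal (1 - ε) • νd.restrict F with hμ1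
      set μ2 := ENNReal.ofReal (1 - ε) • νd.restrict Fᶜ with hμ2
      set μ3 := ENNReal.ofReal ε • νt with hμ3
      have hden : ENNReal.ofReal (1 - ε) • νd = μ1 + μ2 := by
        rw [hμ1, hμ2, ← smul_add, Measure.restrict_add_restrict_compl hFfin.measurableSet]
      have hp3 : p = μ1 + μ2 + μ3 := by rw [hdecomp, hden]
      have hμ1F : μ1 Fᶜ = 0 := by
        rw [hμ1, Measure.smul_apply, smul_eq_mul,
          Measure.restrict_apply hFfin.measurableSet.compl]
        simp
      have hmass : μ2 Set.univ + μ3 Set.univ ≤ ENNReal.ofReal (ε + δ) := by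
        have h2 : μ2 Set.univ ≤ ENNReal.ofReal δ := by
          rw [hμ2, Measure.smul_apply, smul_eq_mul,
            Measure.restrict_apply MeasurableSet.univ, Set.univ_inter]
          calc ENNReal.ofReal (1 - ε) * νd Fᶜ ≤ 1 * ENNReal.ofReal δ := by
                gcongr
                exact ENNReal.ofReal_le_one.2 (by linarith)
            _ = ENNReal.ofReal δ := one_mul _
        have h3 : μ3 Set.univ = ENNReal.ofReal ε := by
          rw [hμ3, Measure.smul_apply, smul_eq_mul, measure_univ, mul_one]
        calc μ2 Set.univ + μ3 Set.univ ≤ ENNReal.ofReal δ + ENNReal.ofReal ε := by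
              rw [h3]; gcongr
          _ = ENNReal.ofReal (ε + δ) := by
              rw [← ENNReal.ofReal_add hδ.le hε0, add_comm]
      exact main_upper p hent1 μ1 μ2 μ3 hp3 hFfin hμ1F (by linarith) hmass
    refine ⟨hupper, fun hac => ?_⟩
    have hle : ∀ s : Set ℝ, MeasurableSet s → ENNReal.ofReal ε * νt s ≤ p s := by
      intro s _
      rw [hdecomp, Measure.add_apply, Measure.smul_apply, Measure.smul_apply, smul_eq_mul,
        smul_eq_mul]
      exact le_add_self
    have hLgeq : ε ≤ liminf (fun ℓ : ℕ => (ent p ℓ).toReal / Real.log ℓ) atTop := by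
      rcases eq_or_lt_of_le hε0 with hε0' | hεpos
      · rw [← hε0']
        refine le_liminf_of_linear (C := 0) (a := 0) ?_ (hub p hent1)
        filter_upwards with ℓ
        simp [ENNReal.toReal_nonneg]
      · refine le_of_forall_pos_le_add' fun θ hθ => ?_
        set η := min (θ / 2) (1 / 2) with hη
        have hη0 : 0 < η := by
          rw [hη]
          exact lt_min (by linarith) (by norm_num)
        have hη1 : η < 1 := lt_of_le_of_lt (min_le_right _ _) (by norm_num)
        have := main_lower p hent1 νt hac hεpos hε1 hle hη0 hη1
        have hηθ : η ≤ θ := le_trans (min_le_left _ _) (by linarith)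
        linarith
    have hbdd_above : IsBoundedUnder (· ≤ ·) atTop
        (fun ℓ : ℕ => (ent p ℓ).toReal / Real.log ℓ) :=
      ⟨(ent p 1).toReal + 1, eventually_map.2 (hub p hent1)⟩
    have hbdd_below : IsBoundedUnder (· ≥ ·) atTop
        (fun ℓ : ℕ => (ent p ℓ).toReal / Real.log ℓ) := by
      refine ⟨0, eventually_map.2 ?_⟩
      filter_upwards [eventually_log_pos] with ℓ hℓ
      positivity
    have hLleU := liminf_le_limsup hbdd_above hbdd_below
    have hUle : limsup (fun ℓ : ℕ => (ent p ℓ).toReal / Real.log ℓ) atTop ≤ ε := by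
      rw [← hupU]; exact hupper
    constructor
    · rw [hlowL]
      exact le_antisymm (le_trans hLleU hUle) hLgeq
    · rw [hupU]
      exact le_antisymm hUle (le_trans hLgeq hLleU)
  · intro hp0
    rw [hupU]
    have hdec : p = p.restrict {(0 : ℝ)} + p.restrict {(0 : ℝ)}ᶜ + 0 := by
      rw [add_zero, Measure.restrict_add_restrict_compl (measurableSet_singleton 0)]
    refine main_upper p hent1 _ _ _ hdec (Set.finite_singleton (0 : ℝ)) ?_ hε0 ?_
    · rw [Measure.restrict_apply (measurableSet_singleton 0).compl]
      simp
    · rw [Measure.restrict_apply MeasurableSet.univ, Set.univ_inter]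
      have hset : ({(0 : ℝ)}ᶜ : Set ℝ) = {x : ℝ | x ≠ 0} := by
        ext x
        simp
      rw [hset]
      simpa using hp0
end

section
/- Let M > 0 and let p_X and p_X̃ be probability measures supported in [−M,M], with X ~ p_X and X̃ ~ p_X̃. Let η(y) = E[X·e^{−(X−y)²/2}]/E[e^{−(X−y)²/2}] be the posterior-mean (Bayes optimal) denoiser for estimating X from the observation y = X + Z with Z ~ N(0,1), and define η̃ analogously from p_X̃. Then for every y ∈ ℝ, |η(y) − η̃(y)| ≤ (M·(15 + 10·M·|y|)/E[e^{−X²/2}])·D_KS(p_X, p_X̃)·e^{2M|y|}. -/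
open MeasureTheory ProbabilityTheory Filter BoundedContinuousFunction
open scoped ENNReal NNReal

open DJM

namespace S19
open Real

lemma sq_le_exp_half (t : ℝ) : t ^ 2 ≤ Real.exp (t ^ 2 / 2) := by
  have h := Real.add_one_le_exp (t ^ 2 / 4)
  have h2 : Real.exp (t ^ 2 / 2) = Real.exp (t ^ 2 / 4) * Real.exp (t ^ 2 / 4) := by
    rw [← Real.exp_add]; ring_nf
  nlinarith [sq_nonneg (1 - t ^ 2 / 4), Real.exp_pos (t ^ 2 / 4), sq_nonneg t]

lemma sq_exp_le_one (t : ℝ) : t ^ 2 * Real.exp (-t ^ 2 / 2) ≤ 1 := by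
  have h := sq_le_exp_half t
  have h2 : Real.exp (-t ^ 2 / 2) = (Real.exp (t ^ 2 / 2))⁻¹ := by
    rw [← Real.exp_neg]; ring_nf
  rw [h2]
  have hp := Real.exp_pos (t ^ 2 / 2)
  rw [mul_inv_le_iff₀ hp, one_mul]
  exact h

lemma hasDeriv_negexp (z : ℝ) :
    HasDerivAt (fun z : ℝ => -Real.exp (-z ^ 2 / 2)) (z * Real.exp (-z ^ 2 / 2)) z := by
  have h1 : HasDerivAt (fun z : ℝ => -z ^ 2 / 2) (-z) z := by
    have := ((hasDerivAt_id z).pow 2).neg.div_const 2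
    convert this using 1 <;> first | rfl | (simp [id]; ring)
  have := h1.exp.neg
  convert this using 1 <;> first | rfl | ring

lemma hasDeriv_posexp (z : ℝ) :
    HasDerivAt (fun z : ℝ => Real.exp (-z ^ 2 / 2)) (-z * Real.exp (-z ^ 2 / 2)) z := by
  have h1 : HasDerivAt (fun z : ℝ => -z ^ 2 / 2) (-z) z := by
    have := ((hasDerivAt_id z).pow 2).neg.div_const 2
    convert this using 1 <;> first | rfl | (simp [id]; ring)
  have := h1.exp
  convert this using 1 <;> first | rfl | ring

lemma B_le (M : ℝ) (hM : 0 < M) :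
    ∫ z in Set.Icc (-M) M, |z| * Real.exp (-z ^ 2 / 2) ≤ 2 := by
  have hcont : Continuous fun z : ℝ => |z| * Real.exp (-z ^ 2 / 2) := by
    fun_prop
  have hle : (-M : ℝ) ≤ M := by linarith
  rw [MeasureTheory.integral_Icc_eq_integral_Ioc, ← intervalIntegral.integral_of_le hle]
  rw [← intervalIntegral.integral_add_adjacent_intervals
    (a := -M) (b := 0) (c := M) (hcont.intervalIntegrable _ _) (hcont.intervalIntegrable _ _)]
  have h1 : ∫ z in (-M : ℝ)..0, |z| * Real.exp (-z ^ 2 / 2) = 1 - Real.exp (-M ^ 2 / 2) := by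
    have hc : ∀ z ∈ Set.uIcc (-M) (0:ℝ), |z| * Real.exp (-z ^ 2 / 2)
        = -z * Real.exp (-z ^ 2 / 2) := by
      intro z hz
      rw [Set.uIcc_of_le (by linarith : (-M:ℝ) ≤ 0)] at hz
      rw [abs_of_nonpos hz.2]
    rw [intervalIntegral.integral_congr hc]
    have hint : IntervalIntegrable (fun z : ℝ => -z * Real.exp (-z ^ 2 / 2)) volume (-M) 0 :=
      Continuous.intervalIntegrable (by fun_prop) _ _
    rw [intervalIntegral.integral_eq_sub_of_hasDerivAt
      (f := fun z : ℝ => Real.exp (-z ^ 2 / 2)) (fun x _ => hasDeriv_posexp x) hint]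
    norm_num
  have h2 : ∫ z in (0 : ℝ)..M, |z| * Real.exp (-z ^ 2 / 2) = 1 - Real.exp (-M ^ 2 / 2) := by
    have hc : ∀ z ∈ Set.uIcc (0:ℝ) M, |z| * Real.exp (-z ^ 2 / 2)
        = z * Real.exp (-z ^ 2 / 2) := by
      intro z hz
      rw [Set.uIcc_of_le (by linarith : (0:ℝ) ≤ M)] at hz
      rw [abs_of_nonneg hz.1]
    rw [intervalIntegral.integral_congr hc]
    have hint : IntervalIntegrable (fun z : ℝ => z * Real.exp (-z ^ 2 / 2)) volume 0 M :=
      Continuous.intervalIntegrable (by fun_prop) _ _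
    rw [intervalIntegral.integral_eq_sub_of_hasDerivAt
      (f := fun z : ℝ => -Real.exp (-z ^ 2 / 2)) (fun x _ => hasDeriv_negexp x) hint]
    norm_num
    ring
  rw [h1, h2]
  have := Real.exp_nonneg (-M ^ 2 / 2)
  linarith

lemma mem_ae {M : ℝ} (p : Measure ℝ) [IsProbabilityMeasure p]
    (hp : p (Set.Icc (-M) M) = 1) : ∀ᵐ a ∂p, a ∈ Set.Icc (-M) M := by
  have hc : p (Set.Icc (-M) M)ᶜ = 0 := by
    rw [measure_compl measurableSet_Icc (by simp), hp, measure_univ, tsub_self]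
  rw [MeasureTheory.ae_iff]
  convert hc using 2
  rfl

lemma ibp {M : ℝ} (hM : 0 < M) (p : Measure ℝ) [IsProbabilityMeasure p]
    (hp : p (Set.Icc (-M) M) = 1) (g : ℝ → ℝ)
    (hg : Differentiable ℝ g) (hg' : Continuous (deriv g))
    (hgi : Integrable g p) :
    ∫ a, g a ∂p
      = g M - ∫ z in Set.Icc (-M) M, deriv g z * (p (Set.Iic z)).toReal := by
  have hae := mem_ae p hp
  set ν : Measure ℝ := volume.restrict (Set.Icc (-M) M) with hν
  have hνfin : IsFiniteMeasure ν := by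
    constructor
    rw [hν, Measure.restrict_apply_univ, Real.volume_Icc]
    exact ENNReal.ofReal_lt_top
  have h1 : ∀ᵐ a ∂p, g a
      = g M - ∫ z, Set.indicator (Set.Iic z) (fun _ => deriv g z) a ∂ν := by
    filter_upwards [hae] with a ha
    have haM : a ≤ M := ha.2
    have hFTC : ∫ z in a..M, deriv g z = g M - g a :=
      intervalIntegral.integral_deriv_eq_sub (fun x _ => hg x)
        (hg'.intervalIntegrable _ _)
    have heq : ∫ z, Set.indicator (Set.Iic z) (fun _ => deriv g z) a ∂ν
        = ∫ z in Set.Icc a M, deriv g z := by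
      have : ∀ z : ℝ, Set.indicator (Set.Iic z) (fun _ => deriv g z) a
          = Set.indicator (Set.Ici a) (deriv g) z := by
        intro z
        simp only [Set.indicator_apply, Set.mem_Iic, Set.mem_Ici]
      rw [hν]
      simp_rw [this]
      rw [MeasureTheory.setIntegral_indicator measurableSet_Ici]
      congr 2
      ext x
      simp only [Set.mem_inter_iff, Set.mem_Icc, Set.mem_Ici]
      constructor
      · rintro ⟨⟨_, h2⟩, h3⟩; exact ⟨h3, h2⟩
      · rintro ⟨h1, h2⟩; exact ⟨⟨le_trans ha.1 h1, h2⟩, h1⟩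
    rw [heq, MeasureTheory.integral_Icc_eq_integral_Ioc,
      ← intervalIntegral.integral_of_le haM, hFTC]
    ring
  rw [integral_congr_ae h1]
  obtain ⟨C, hC⟩ := (isCompact_Icc (a := -M) (b := M)).exists_bound_of_continuousOn
    hg'.continuousOn
  set F : ℝ × ℝ → ℝ := fun q => Set.indicator (Set.Iic q.2) (fun _ => deriv g q.2) q.1 with hF
  have hFmeas : Measurable F := by
    have : F = fun q : ℝ × ℝ => if q.1 ≤ q.2 then deriv g q.2 else 0 := by
      funext q
      simp [hF, Set.indicator_apply]
    rw [this]
    exact Measurable.ite (measurableSet_le measurable_fst measurable_snd)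
      (hg'.measurable.comp measurable_snd) measurable_const
  have hbad : (p.prod ν) {q : ℝ × ℝ | ¬ ‖F q‖ ≤ max C 0} = 0 := by
    have hsub : {q : ℝ × ℝ | ¬ ‖F q‖ ≤ max C 0} ⊆ Set.univ ×ˢ (Set.Icc (-M) M)ᶜ := by
      intro q hq
      simp only [Set.mem_setOf_eq, not_le] at hq
      refine ⟨Set.mem_univ _, fun hq2 => ?_⟩
      have : ‖F q‖ ≤ max C 0 := by
        rw [hF]
        by_cases h : q.1 ∈ Set.Iic q.2
        · simp only [Set.indicator_of_mem h]
          exact le_trans (hC q.2 hq2) (le_max_left _ _)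
        · simp only [Set.indicator_of_notMem h, norm_zero]
          exact le_max_right _ _
      exact absurd this (not_le.mpr hq)
    refine measure_mono_null hsub ?_
    rw [Measure.prod_prod, hν, Measure.restrict_apply (measurableSet_Icc.compl)]
    simp
  have hFint : Integrable (Function.uncurry
      fun a z => Set.indicator (Set.Iic z) (fun _ => deriv g z) a) (p.prod ν) := by
    refine Integrable.mono' (integrable_const (max C 0))
      (hFmeas.aestronglyMeasurable) ?_
    rw [MeasureTheory.ae_iff]
    exact hbad
  have h2int : Integrable (fun a => ∫ z, Set.indicator (Set.Iic z)
      (fun _ => deriv g z) a ∂ν) p := hFint.integral_prod_left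
  rw [integral_sub (integrable_const _) h2int, integral_const, probReal_univ, one_smul]
  congr 1
  rw [MeasureTheory.integral_integral_swap hFint]
  refine integral_congr_ae (Filter.Eventually.of_forall fun z => ?_)
  show ∫ x, (Set.Iic z).indicator (fun _ => deriv g z) x ∂p
      = deriv g z * (p (Set.Iic z)).toReal
  rw [MeasureTheory.integral_indicator_const (deriv g z) measurableSet_Iic]
  rw [smul_eq_mul, mul_comm]; rfl

lemma cdf_meas (p : Measure ℝ) [IsProbabilityMeasure p] :
    Measurable (fun z => (p (Set.Iic z)).toReal) := by
  apply Monotone.measurable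
  intro a b hab
  exact ENNReal.toReal_mono (measure_ne_top p _)
    (measure_mono (Set.Iic_subset_Iic.mpr hab))

lemma cdf_bound (p : Measure ℝ) [IsProbabilityMeasure p] (z : ℝ) :
    (p (Set.Iic z)).toReal ≤ 1 := by
  have h := prob_le_one (μ := p) (s := Set.Iic z)
  calc (p (Set.Iic z)).toReal ≤ (1 : ℝ≥0∞).toReal :=
        ENNReal.toReal_mono ENNReal.one_ne_top h
    _ = 1 := by simp

lemma intDF (p : Measure ℝ) [IsProbabilityMeasure p] {M : ℝ} (g : ℝ → ℝ)
    (hg' : Continuous (deriv g)) :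
    Integrable (fun z => deriv g z * (p (Set.Iic z)).toReal)
      (volume.restrict (Set.Icc (-M) M)) := by
  refine Integrable.mono' (hg'.abs.integrableOn_Icc) ?_ ?_
  · exact ((hg'.measurable.mul (cdf_meas p))).aestronglyMeasurable
  · refine Filter.Eventually.of_forall fun z => ?_
    rw [Real.norm_eq_abs, abs_mul]
    have h1 : |(p (Set.Iic z)).toReal| ≤ 1 := by
      rw [abs_of_nonneg ENNReal.toReal_nonneg]; exact cdf_bound p z
    nlinarith [abs_nonneg (deriv g z), abs_nonneg ((p (Set.Iic z)).toReal)]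

lemma diff_le {M : ℝ} (hM : 0 < M) (p pt : Measure ℝ)
    [IsProbabilityMeasure p] [IsProbabilityMeasure pt]
    (hp : p (Set.Icc (-M) M) = 1) (hpt : pt (Set.Icc (-M) M) = 1) (g : ℝ → ℝ)
    (hg : Differentiable ℝ g) (hg' : Continuous (deriv g))
    (hgp : Integrable g p) (hgpt : Integrable g pt) (K : ℝ)
    (hK : ∀ z, |(p (Set.Iic z)).toReal - (pt (Set.Iic z)).toReal| ≤ K) :
    |(∫ a, g a ∂p) - ∫ a, g a ∂pt| ≤ K * ∫ z in Set.Icc (-M) M, |deriv g z| := by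
  rw [ibp hM p hp g hg hg' hgp, ibp hM pt hpt g hg hg' hgpt]
  have hintp := intDF p (M := M) g hg'
  have hintpt := intDF pt (M := M) g hg'
  have heq : (g M - ∫ z in Set.Icc (-M) M, deriv g z * (p (Set.Iic z)).toReal)
      - (g M - ∫ z in Set.Icc (-M) M, deriv g z * (pt (Set.Iic z)).toReal)
      = ∫ z in Set.Icc (-M) M,
          deriv g z * ((pt (Set.Iic z)).toReal - (p (Set.Iic z)).toReal) := by
    rw [show ∀ x y : ℝ, ∀ c : ℝ, (c - x) - (c - y) = y - x from by intros; ring]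
    rw [← integral_sub hintpt hintp]
    congr 1; funext z; ring
  rw [heq]
  have habs := MeasureTheory.norm_integral_le_integral_norm
    (f := fun z => deriv g z * ((pt (Set.Iic z)).toReal - (p (Set.Iic z)).toReal))
    (μ := volume.restrict (Set.Icc (-M) M))
  simp only [Real.norm_eq_abs] at habs
  refine le_trans habs ?_
  have hmono : ∫ z in Set.Icc (-M) M,
        |deriv g z * ((pt (Set.Iic z)).toReal - (p (Set.Iic z)).toReal)|
      ≤ ∫ z in Set.Icc (-M) M, |deriv g z| * K := by
    have hInt1 : Integrable
        (fun z => |deriv g z * ((pt (Set.Iic z)).toReal - (p (Set.Iic z)).toReal)|)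
        (volume.restrict (Set.Icc (-M) M)) := by
      refine (hintpt.sub hintp).abs.congr (Filter.Eventually.of_forall fun z => ?_)
      simp only [Pi.sub_apply]
      congr 1
      ring
    refine integral_mono hInt1 (hg'.abs.integrableOn_Icc.mul_const K) ?_
    intro z
    show |deriv g z * ((pt (Set.Iic z)).toReal - (p (Set.Iic z)).toReal)| ≤ |deriv g z| * K
    rw [abs_mul]
    have h2 : |(pt (Set.Iic z)).toReal - (p (Set.Iic z)).toReal| ≤ K := by
      rw [abs_sub_comm]; exact hK z
    exact mul_le_mul_of_nonneg_left h2 (abs_nonneg _)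
  refine le_trans hmono ?_
  rw [MeasureTheory.integral_mul_const]
  rw [mul_comm]

lemma hasDerivF (y a : ℝ) :
    HasDerivAt (fun a : ℝ => Real.exp (-(1 * (y - a) ^ 2) / 2))
      ((y - a) * Real.exp (-(1 * (y - a) ^ 2) / 2)) a := by
  have h0 : HasDerivAt (fun a : ℝ => y - a) (-1) a := (hasDerivAt_id a).const_sub y
  have h1 : HasDerivAt (fun a : ℝ => -(1 * (y - a) ^ 2) / 2) (y - a) a := by
    have := ((h0.pow 2).const_mul (1:ℝ)).neg.div_const 2
    convert this using 1 <;> first | rfl | ring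
  have := h1.exp
  convert this using 1 <;> first | rfl | ring

lemma hasDerivG (y a : ℝ) :
    HasDerivAt (fun a : ℝ => a * Real.exp (-(1 * (y - a) ^ 2) / 2))
      (Real.exp (-(1 * (y - a) ^ 2) / 2)
        + a * ((y - a) * Real.exp (-(1 * (y - a) ^ 2) / 2))) a := by
  have := (hasDerivAt_id a).mul (hasDerivF y a)
  convert this using 1 <;> first | rfl | simp only [id_eq, one_mul]

lemma const_int {M : ℝ} (hM : 0 < M) (c : ℝ) :
    ∫ _ in Set.Icc (-M) M, c = 2 * M * c := by
  rw [setIntegral_const, measureReal_def, Real.volume_Icc, ENNReal.toReal_ofReal (by linarith), smul_eq_mul]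
  ring

end S19

set_option maxHeartbeats 1000000 in
/-- Lemma from Appendix A of the paper. For priors `p, p̃` supported in
`[-M, M]`, the Bayes optimal denoisers `η, η̃` in unit Gaussian noise satisfy
`|η(y) - η̃(y)| ≤ (M(15 + 10M|y|)/E[e^{-X²/2}]) · D_KS(p, p̃) · e^{2M|y|}`. -/
theorem statement19 (M : ℝ) (hM : 0 < M) (p pt : Measure ℝ)
    [IsProbabilityMeasure p] [IsProbabilityMeasure pt]
    (hp : p (Set.Icc (-M) M) = 1) (hpt : pt (Set.Icc (-M) M) = 1) (y : ℝ) :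
    |postMean p 1 y - postMean pt 1 y|
      ≤ M * (15 + 10 * M * |y|) / (∫ x, Real.exp (-x ^ 2 / 2) ∂p) *
          ksDist p pt * Real.exp (2 * M * |y|) := by
  have hae := S19.mem_ae p hp
  have haet := S19.mem_ae pt hpt
  set f : ℝ → ℝ := fun a => Real.exp (-(1 * (y - a) ^ 2) / 2) with hf
  set gg : ℝ → ℝ := fun a => a * Real.exp (-(1 * (y - a) ^ 2) / 2) with hgg
  have hf_pos : ∀ a, 0 < f a := fun a => Real.exp_pos _
  have hf_le_one : ∀ a, f a ≤ 1 := by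
    intro a
    rw [hf]
    refine Real.exp_le_one_iff.mpr (by nlinarith [sq_nonneg (y - a)])
  have hfcont : Continuous f := by fun_prop
  have hggcont : Continuous gg := by fun_prop
  -- integrability
  have hfi_p : Integrable f p := by
    refine Integrable.mono' (integrable_const 1) hfcont.aestronglyMeasurable ?_
    refine Filter.Eventually.of_forall fun a => ?_
    rw [Real.norm_eq_abs, abs_of_pos (hf_pos a)]
    exact hf_le_one a
  have hfi_pt : Integrable f pt := by
    refine Integrable.mono' (integrable_const 1) hfcont.aestronglyMeasurable ?_
    refine Filter.Eventually.of_forall fun a => ?_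
    rw [Real.norm_eq_abs, abs_of_pos (hf_pos a)]
    exact hf_le_one a
  have hgi_p : Integrable gg p := by
    refine Integrable.mono' (integrable_const M) hggcont.aestronglyMeasurable ?_
    filter_upwards [hae] with a ha
    rw [Real.norm_eq_abs, hgg]
    have h1 : |a| ≤ M := abs_le.mpr ⟨ha.1, ha.2⟩
    calc |a * f a| = |a| * |f a| := abs_mul _ _
      _ ≤ M * 1 := by
          refine mul_le_mul h1 ?_ (abs_nonneg _) (by linarith)
          rw [abs_of_pos (hf_pos a)]; exact hf_le_one a
      _ = M := by ring
  have hgi_pt : Integrable gg pt := by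
    refine Integrable.mono' (integrable_const M) hggcont.aestronglyMeasurable ?_
    filter_upwards [haet] with a ha
    rw [Real.norm_eq_abs, hgg]
    have h1 : |a| ≤ M := abs_le.mpr ⟨ha.1, ha.2⟩
    calc |a * f a| = |a| * |f a| := abs_mul _ _
      _ ≤ M * 1 := by
          refine mul_le_mul h1 ?_ (abs_nonneg _) (by linarith)
          rw [abs_of_pos (hf_pos a)]; exact hf_le_one a
      _ = M := by ring
  -- KS distance facts
  have hbdd : BddAbove (Set.range fun z =>
      |(p (Set.Iic z)).toReal - (pt (Set.Iic z)).toReal|) := by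
    refine ⟨2, ?_⟩
    rintro x ⟨z, rfl⟩
    have h1 := S19.cdf_bound p z
    have h2 := S19.cdf_bound pt z
    have h3 : (0:ℝ) ≤ (p (Set.Iic z)).toReal := ENNReal.toReal_nonneg
    have h4 : (0:ℝ) ≤ (pt (Set.Iic z)).toReal := ENNReal.toReal_nonneg
    rw [abs_sub_le_iff]
    constructor <;> linarith
  have hK : ∀ z, |(p (Set.Iic z)).toReal - (pt (Set.Iic z)).toReal| ≤ ksDist p pt :=
    fun z => le_ciSup hbdd z
  have hK0 : 0 ≤ ksDist p pt := le_trans (abs_nonneg _) (hK 0)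
  set K := ksDist p pt with hKdef
  -- derivative facts
  have hderivf : deriv f = fun a => (y - a) * f a :=
    funext fun a => (S19.hasDerivF y a).deriv
  have hderivg : deriv gg = fun a => f a + a * ((y - a) * f a) :=
    funext fun a => (S19.hasDerivG y a).deriv
  have hdiff_f : Differentiable ℝ f := fun a => (S19.hasDerivF y a).differentiableAt
  have hdiff_g : Differentiable ℝ gg := fun a => (S19.hasDerivG y a).differentiableAt
  have hcderivf : Continuous (deriv f) := by rw [hderivf]; fun_prop
  have hcderivg : Continuous (deriv gg) := by rw [hderivg]; fun_prop
  set E := Real.exp (M * |y| - y ^ 2 / 2) with hE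
  have hE_pos : 0 < E := Real.exp_pos _
  -- pointwise bound on f
  have hfE : ∀ z ∈ Set.Icc (-M) M, f z ≤ E * Real.exp (-z ^ 2 / 2) := by
    intro z hz
    rw [hf, hE, ← Real.exp_add]
    refine Real.exp_le_exp.mpr ?_
    have h1 : |z| ≤ M := abs_le.mpr ⟨hz.1, hz.2⟩
    have h2 : y * z ≤ |y| * M := by
      calc y * z ≤ |y * z| := le_abs_self _
        _ = |y| * |z| := abs_mul _ _
        _ ≤ |y| * M := mul_le_mul_of_nonneg_left h1 (abs_nonneg y)
    nlinarith
  -- integral bound for deriv f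
  have hIf : ∫ z in Set.Icc (-M) M, |deriv f z| ≤ E * (2 * M * |y| + 2) := by
    rw [hderivf]
    have hmono : ∫ z in Set.Icc (-M) M, |(y - z) * f z|
        ≤ ∫ z in Set.Icc (-M) M, (E * |y| + E * (|z| * Real.exp (-z ^ 2 / 2))) := by
      refine setIntegral_mono_on ((by fun_prop : Continuous fun z => |(y - z) * f z|).integrableOn_Icc)
        ((by fun_prop : Continuous fun z : ℝ =>
          E * |y| + E * (|z| * Real.exp (-z ^ 2 / 2))).integrableOn_Icc)
        measurableSet_Icc ?_
      intro z hz
      have h1 := hfE z hz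
      have h2 : Real.exp (-z ^ 2 / 2) ≤ 1 :=
        Real.exp_le_one_iff.mpr (by nlinarith [sq_nonneg z])
      have h3 : |(y - z) * f z| = |y - z| * f z := by
        rw [abs_mul, abs_of_pos (hf_pos z)]
      rw [h3]
      have h4 : |y - z| ≤ |y| + |z| := abs_sub _ _
      have h5 : 0 < f z := hf_pos z
      nlinarith [mul_le_mul_of_nonneg_right h4 h5.le,
        mul_le_mul_of_nonneg_left h1 (abs_nonneg y),
        mul_le_mul_of_nonneg_left h1 (abs_nonneg z),
        mul_nonneg (mul_nonneg hE_pos.le (abs_nonneg y)) (sub_nonneg.mpr h2)]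
    refine le_trans hmono ?_
    rw [integral_add (integrableOn_const (C := E * |y|) (s := Set.Icc (-M) M) (by rw [Real.volume_Icc]; exact ENNReal.ofReal_ne_top) enorm_ne_top)
      (((by fun_prop : Continuous fun z : ℝ =>
        E * (|z| * Real.exp (-z ^ 2 / 2)))).integrableOn_Icc)]
    rw [S19.const_int hM]
    rw [MeasureTheory.integral_const_mul]
    have hB := S19.B_le M hM
    nlinarith [hE_pos, abs_nonneg y]
  -- integral bound for deriv gg
  have hIg : ∫ z in Set.Icc (-M) M, |deriv gg z| ≤ E * (4 * M + 2 * M ^ 2 * |y|) := by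
    rw [hderivg]
    have hmono : ∫ z in Set.Icc (-M) M, |f z + z * ((y - z) * f z)|
        ≤ ∫ z in Set.Icc (-M) M, (E * (2 + M * |y|)) := by
      refine setIntegral_mono_on ((by fun_prop : Continuous fun z =>
          |f z + z * ((y - z) * f z)|).integrableOn_Icc)
        (integrableOn_const (by rw [Real.volume_Icc]; exact ENNReal.ofReal_ne_top) enorm_ne_top)
        measurableSet_Icc ?_
      intro z hz
      have h1 := hfE z hz
      have hzM : |z| ≤ M := abs_le.mpr ⟨hz.1, hz.2⟩
      have h2 : Real.exp (-z ^ 2 / 2) ≤ 1 :=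
        Real.exp_le_one_iff.mpr (by nlinarith [sq_nonneg z])
      have h5 : 0 < f z := hf_pos z
      have hsq := S19.sq_exp_le_one z
      -- |f + z(y-z)f| ≤ f + |z||y| f + z^2 f ≤ E e + M|y| E e + E (z^2 e) ≤ E(1 + M|y| + 1)
      have step1 : |f z + z * ((y - z) * f z)| ≤ f z + |z| * |y| * f z + z ^ 2 * f z := by
        calc |f z + z * ((y - z) * f z)| ≤ |f z| + |z * ((y - z) * f z)| := abs_add_le _ _
          _ = f z + |z| * |y - z| * f z := by
              rw [abs_of_pos h5, abs_mul, abs_mul, abs_of_pos h5]; ring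
          _ ≤ f z + |z| * |y| * f z + z ^ 2 * f z := by
              nlinarith [mul_le_mul_of_nonneg_right
                (mul_le_mul_of_nonneg_left (abs_sub y z) (abs_nonneg z)) h5.le,
                sq_abs z, h5.le]
      refine le_trans step1 ?_
      have e1 : f z ≤ E := le_trans h1 (by nlinarith)
      have e2 : |z| * |y| * f z ≤ M * |y| * E := by
        have hzy : |z| * |y| ≤ M * |y| := mul_le_mul_of_nonneg_right hzM (abs_nonneg y)
        calc |z| * |y| * f z ≤ (M * |y|) * f z := mul_le_mul_of_nonneg_right hzy h5.le
          _ ≤ (M * |y|) * E := mul_le_mul_of_nonneg_left e1 (by positivity)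
          _ = M * |y| * E := by ring
      have e3 : z ^ 2 * f z ≤ E := by
        calc z ^ 2 * f z ≤ z ^ 2 * (E * Real.exp (-z ^ 2 / 2)) := by
              nlinarith [sq_nonneg z]
          _ = E * (z ^ 2 * Real.exp (-z ^ 2 / 2)) := by ring
          _ ≤ E * 1 := by nlinarith
          _ = E := by ring
      linarith
    refine le_trans hmono ?_
    rw [S19.const_int hM]
    nlinarith [hE_pos, abs_nonneg y]
  -- the two key KS bounds
  have key1 : |(∫ a, f a ∂p) - ∫ a, f a ∂pt| ≤ K * (E * (2 * M * |y| + 2)) := by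
    refine le_trans (S19.diff_le hM p pt hp hpt f hdiff_f hcderivf hfi_p hfi_pt K hK) ?_
    exact mul_le_mul_of_nonneg_left hIf hK0
  have key2 : |(∫ a, gg a ∂p) - ∫ a, gg a ∂pt| ≤ K * (E * (4 * M + 2 * M ^ 2 * |y|)) := by
    refine le_trans (S19.diff_le hM p pt hp hpt gg hdiff_g hcderivg hgi_p hgi_pt K hK) ?_
    exact mul_le_mul_of_nonneg_left hIg hK0
  -- denominators
  set Z := ∫ x, Real.exp (-x ^ 2 / 2) ∂p with hZ
  have hZint_p : Integrable (fun x => Real.exp (-x ^ 2 / 2)) p := by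
    refine Integrable.mono' (integrable_const 1)
      ((by fun_prop : Continuous fun x : ℝ => Real.exp (-x ^ 2 / 2)).aestronglyMeasurable) ?_
    refine Filter.Eventually.of_forall fun a => ?_
    rw [Real.norm_eq_abs, abs_of_pos (Real.exp_pos _)]
    exact Real.exp_le_one_iff.mpr (by nlinarith [sq_nonneg a])
  have hZint_pt : Integrable (fun x => Real.exp (-x ^ 2 / 2)) pt := by
    refine Integrable.mono' (integrable_const 1)
      ((by fun_prop : Continuous fun x : ℝ => Real.exp (-x ^ 2 / 2)).aestronglyMeasurable) ?_
    refine Filter.Eventually.of_forall fun a => ?_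
    rw [Real.norm_eq_abs, abs_of_pos (Real.exp_pos _)]
    exact Real.exp_le_one_iff.mpr (by nlinarith [sq_nonneg a])
  have hZ_pos : 0 < Z := by
    have hmono : Real.exp (-M ^ 2 / 2) ≤ Z := by
      rw [hZ, show Real.exp (-M ^ 2 / 2) = ∫ _, Real.exp (-M ^ 2 / 2) ∂p by
        rw [integral_const, probReal_univ, one_smul]]
      refine integral_mono_ae (integrable_const _) hZint_p ?_
      filter_upwards [hae] with a ha
      refine Real.exp_le_exp.mpr ?_
      have h1 : a ^ 2 ≤ M ^ 2 := sq_le_sq' ha.1 ha.2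
      linarith
    linarith [Real.exp_pos (-M ^ 2 / 2)]
  set c := Real.exp (-(M * |y|) - y ^ 2 / 2) with hc
  have hc_pos : 0 < c := Real.exp_pos _
  have hD_lb : c * Z ≤ ∫ a, f a ∂p := by
    rw [hZ, ← MeasureTheory.integral_const_mul]
    refine integral_mono_ae (hZint_p.const_mul c) hfi_p ?_
    filter_upwards [hae] with a ha
    rw [hf, hc, ← Real.exp_add]
    refine Real.exp_le_exp.mpr ?_
    have h1 : |a| ≤ M := abs_le.mpr ⟨ha.1, ha.2⟩
    have h2 : -(|y| * M) ≤ y * a := by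
      have h3 : |y * a| ≤ |y| * M := by
        rw [abs_mul]
        exact mul_le_mul_of_nonneg_left h1 (abs_nonneg y)
      linarith [neg_abs_le (y * a)]
    nlinarith
  have hD_pos : 0 < ∫ a, f a ∂p := lt_of_lt_of_le (by positivity) hD_lb
  -- pt denominator positivity
  have hDt_pos : 0 < ∫ a, f a ∂pt := by
    have h0 : (0:ℝ) < Real.exp (-(|y| + M) ^ 2 / 2) := Real.exp_pos _
    have hmono : Real.exp (-(|y| + M) ^ 2 / 2) ≤ ∫ a, f a ∂pt := by
      rw [show Real.exp (-(|y| + M) ^ 2 / 2) = ∫ _, Real.exp (-(|y| + M) ^ 2 / 2) ∂pt by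
        rw [integral_const, probReal_univ, one_smul]]
      refine integral_mono_ae (integrable_const _) hfi_pt ?_
      filter_upwards [haet] with a ha
      rw [hf]
      refine Real.exp_le_exp.mpr ?_
      have h1 : |a| ≤ M := abs_le.mpr ⟨ha.1, ha.2⟩
      have h2 : |y - a| ≤ |y| + M := le_trans (abs_sub y a) (by linarith)
      have h3 := abs_le.mp h2
      have h4 : (y - a) ^ 2 ≤ (|y| + M) ^ 2 := sq_le_sq' h3.1 h3.2
      linarith
    linarith
  -- numerator bound for pt
  have hNt_le : |∫ a, gg a ∂pt| ≤ M * ∫ a, f a ∂pt := by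
    rw [← MeasureTheory.integral_const_mul, ← Real.norm_eq_abs]
    refine norm_integral_le_of_norm_le (hfi_pt.const_mul M) ?_
    filter_upwards [haet] with a ha
    rw [Real.norm_eq_abs, hgg]
    have h1 : |a| ≤ M := abs_le.mpr ⟨ha.1, ha.2⟩
    rw [abs_mul, abs_of_pos (hf_pos a)]
    exact mul_le_mul_of_nonneg_right h1 (hf_pos a).le
  -- assemble
  set N := ∫ a, gg a ∂p with hN
  set Nt := ∫ a, gg a ∂pt with hNt
  set D := ∫ a, f a ∂p with hD
  set Dt := ∫ a, f a ∂pt with hDt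
  have hpost : postMean p 1 y = N / D ∧ postMean pt 1 y = Nt / Dt := by
    constructor <;> rfl
  rw [hpost.1, hpost.2]
  have hsplit : N / D - Nt / Dt = ((N - Nt) + (Nt / Dt) * (Dt - D)) / D := by
    field_simp
    ring
  have hNtDt : |Nt / Dt| ≤ M := by
    rw [abs_div, abs_of_pos hDt_pos, div_le_iff₀ hDt_pos]
    exact hNt_le
  have habs : |N / D - Nt / Dt| ≤ (|N - Nt| + M * |Dt - D|) / D := by
    rw [hsplit, abs_div, abs_of_pos hD_pos]
    refine div_le_div_of_nonneg_right ?_ hD_pos.le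
    calc |N - Nt + Nt / Dt * (Dt - D)|
        ≤ |N - Nt| + |Nt / Dt * (Dt - D)| := abs_add_le _ _
      _ = |N - Nt| + |Nt / Dt| * |Dt - D| := by rw [abs_mul]
      _ ≤ |N - Nt| + M * |Dt - D| := by
          have := mul_le_mul_of_nonneg_right hNtDt (abs_nonneg (Dt - D))
          linarith
  have hnum : |N - Nt| + M * |Dt - D| ≤ K * E * (6 * M + 4 * M ^ 2 * |y|) := by
    have h1 : |Dt - D| ≤ K * (E * (2 * M * |y| + 2)) := by rw [abs_sub_comm]; exact key1
    nlinarith [key2, mul_le_mul_of_nonneg_left h1 hM.le]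
  have hstep1 : |N / D - Nt / Dt| ≤ K * E * (6 * M + 4 * M ^ 2 * |y|) / D :=
    le_trans habs (div_le_div_of_nonneg_right hnum hD_pos.le)
  set G := Real.exp (M * |y| + y ^ 2 / 2) with hG
  have hZG : Z ≤ G * D := by
    have hcG : G * c = 1 := by
      rw [hG, hc, ← Real.exp_add,
        show M * |y| + y ^ 2 / 2 + (-(M * |y|) - y ^ 2 / 2) = 0 by ring, Real.exp_zero]
    calc Z = G * (c * Z) := by rw [← mul_assoc, hcG, one_mul]
      _ ≤ G * D := mul_le_mul_of_nonneg_left hD_lb (Real.exp_nonneg _)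
  have hA0 : 0 ≤ K * E * (6 * M + 4 * M ^ 2 * |y|) := by
    have h0 : (0:ℝ) ≤ 6 * M + 4 * M ^ 2 * |y| := by positivity
    exact mul_nonneg (mul_nonneg hK0 hE_pos.le) h0
  have hstep2 : K * E * (6 * M + 4 * M ^ 2 * |y|) / D
      ≤ K * E * (6 * M + 4 * M ^ 2 * |y|) * G / Z := by
    rw [div_le_div_iff₀ hD_pos hZ_pos]
    calc K * E * (6 * M + 4 * M ^ 2 * |y|) * Z
        ≤ K * E * (6 * M + 4 * M ^ 2 * |y|) * (G * D) :=
          mul_le_mul_of_nonneg_left hZG hA0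
      _ = K * E * (6 * M + 4 * M ^ 2 * |y|) * G * D := by ring
  have hfin : K * E * (6 * M + 4 * M ^ 2 * |y|) * G / Z
      ≤ M * (15 + 10 * M * |y|) / Z * K * Real.exp (2 * M * |y|) := by
    have hEG : E * G = Real.exp (2 * M * |y|) := by
      rw [hE, hG, ← Real.exp_add]; congr 1; ring
    rw [show M * (15 + 10 * M * |y|) / Z * K * Real.exp (2 * M * |y|)
        = M * (15 + 10 * M * |y|) * K * Real.exp (2 * M * |y|) / Z from by ring]
    rw [show K * E * (6 * M + 4 * M ^ 2 * |y|) * G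
        = K * (6 * M + 4 * M ^ 2 * |y|) * (E * G) from by ring, hEG]
    refine div_le_div_of_nonneg_right ?_ hZ_pos.le
    have hAB : 6 * M + 4 * M ^ 2 * |y| ≤ M * (15 + 10 * M * |y|) := by
      nlinarith [abs_nonneg y]
    nlinarith [mul_le_mul_of_nonneg_left hAB
      (mul_nonneg hK0 (Real.exp_nonneg (2 * M * |y|)))]
  exact le_trans hstep1 (le_trans hstep2 hfin)
end
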